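/- arXiv:2009.02867 — 9 statements merged into one kernel-verified Lean document; each statement's English description precedes it below -/
import Mathlib

section
/- Suppose the continuous trajectory x : [0,∞) → ℝ^d persistently excites the set Ω ⊆ ℝ^d in the sense PE1 with constants T₀, γ, δ, Δ > 0. Then x persistently excites Ω in the sense PE2; explicitly, for every t ≥ T₀ and every g ∈ H, ∫_t^{t+Δ+δ} ⟪k(x(τ)), g⟫_H² dτ ≥ (γ²/δ) ‖P_Ω g‖_H². -/
open scoped RealInnerProductSpace
open Filter MeasureTheory

/-- The orthogonal projection of `g` onto the closed linear span of `{k y : y ∈ Ω}`. -/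
noncomputable def closedSpanProj {H : Type*} [NormedAddCommGroup H] [InnerProductSpace ℝ H]
    [CompleteSpace H] {d : ℕ} (k : EuclideanSpace ℝ (Fin d) → H)
    (Ω : Set (EuclideanSpace ℝ (Fin d))) (g : H) : H :=
  haveI : CompleteSpace ((Submodule.span ℝ (k '' Ω)).topologicalClosure) :=
    (Submodule.isClosed_topologicalClosure _).completeSpace_coe
  (Submodule.orthogonalProjectionOnto ((Submodule.span ℝ (k '' Ω)).topologicalClosure) g : H)

/-- Cauchy–Schwarz for interval integrals of continuous functions:
`(∫ f)² ≤ (b - a) * ∫ f²`. -/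
lemma sq_intervalIntegral_le {f : ℝ → ℝ} (hf : Continuous f) {a b : ℝ} (hab : a ≤ b) :
    (∫ τ in a..b, f τ) ^ 2 ≤ (b - a) * ∫ τ in a..b, (f τ) ^ 2 := by
  rcases eq_or_lt_of_le hab with rfl | hab
  · simp
  set L := b - a with hL
  have hL0 : 0 < L := by simp [hL, hab]
  set I := ∫ τ in a..b, f τ with hI
  set c := I / L with hc
  have hint : IntervalIntegrable f volume a b := hf.intervalIntegrable a b
  have hint2 : IntervalIntegrable (fun τ => (f τ) ^ 2) volume a b :=
    (hf.pow 2).intervalIntegrable a b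
  have key : 0 ≤ ∫ τ in a..b, (f τ - c) ^ 2 :=
    intervalIntegral.integral_nonneg hab.le (fun τ _ => sq_nonneg _)
  have expand : (∫ τ in a..b, (f τ - c) ^ 2)
      = (∫ τ in a..b, (f τ) ^ 2) - 2 * c * I + c ^ 2 * L := by
    have : (fun τ => (f τ - c) ^ 2) = fun τ => (f τ) ^ 2 - 2 * c * f τ + c ^ 2 := by
      funext τ; ring
    rw [this, intervalIntegral.integral_add (hint2.sub ((hint.const_mul _)))
        (intervalIntegrable_const),
      intervalIntegral.integral_sub hint2 (hint.const_mul _),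
      intervalIntegral.integral_const_mul, intervalIntegral.integral_const]
    simp [hI, hL, smul_eq_mul, mul_comm]
  have h2 : 2 * c * I = 2 * (I ^ 2 / L) := by
    rw [hc]; ring
  have h3 : c ^ 2 * L = I ^ 2 / L := by
    rw [hc]; field_simp
  rw [expand, h2, h3] at key
  have : I ^ 2 / L ≤ ∫ τ in a..b, (f τ) ^ 2 := by linarith
  calc I ^ 2 = (I ^ 2 / L) * L := by field_simp
    _ ≤ (∫ τ in a..b, (f τ) ^ 2) * L := by
        exact mul_le_mul_of_nonneg_right this hL0.le
    _ = L * ∫ τ in a..b, (f τ) ^ 2 := mul_comm _ _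

/-- PE1 (with explicit constants) implies PE2, with the explicit estimate
`∫_t^{t+Δ+δ} ⟪k (x τ), g⟫² dτ ≥ (γ²/δ) ‖P_Ω g‖²`. -/
theorem pe1_implies_pe2 {H : Type*} [NormedAddCommGroup H] [InnerProductSpace ℝ H]
    [CompleteSpace H] {d : ℕ} (k : EuclideanSpace ℝ (Fin d) → H) (hk : Continuous k)
    (Ω : Set (EuclideanSpace ℝ (Fin d)))
    (x : ℝ → EuclideanSpace ℝ (Fin d)) (hx : Continuous x)
    (T₀ γ δ Δ : ℝ) (hT₀ : 0 < T₀) (hγ : 0 < γ) (hδ : 0 < δ) (hΔ : 0 < Δ)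
    (hPE1 : ∀ t, T₀ ≤ t → ∀ g : H, ∃ s ∈ Set.Icc t (t + Δ),
      γ * ‖closedSpanProj k Ω g‖ ≤ |(∫ τ in s..(s + δ), ⟪k (x τ), g⟫)|) :
    ∀ t, T₀ ≤ t → ∀ g : H,
      (γ ^ 2 / δ) * ‖closedSpanProj k Ω g‖ ^ 2 ≤
        ∫ τ in t..(t + Δ + δ), (⟪k (x τ), g⟫) ^ 2 := by
  intro t ht g
  obtain ⟨s, hs, hsI⟩ := hPE1 t ht g
  set f : ℝ → ℝ := fun τ => ⟪k (x τ), g⟫ with hf_def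
  have hf : Continuous f := (innerSL ℝ (E := H)).continuous₂.comp₂ (hk.comp hx) continuous_const
  set I := ∫ τ in s..(s + δ), f τ with hI
  have h1 : (γ * ‖closedSpanProj k Ω g‖) ^ 2 ≤ I ^ 2 := by
    rw [← sq_abs I]
    exact pow_le_pow_left₀ (by positivity) hsI 2
  have h2 : I ^ 2 ≤ δ * ∫ τ in s..(s + δ), (f τ) ^ 2 := by
    have := sq_intervalIntegral_le hf (a := s) (b := s + δ) (by linarith)
    simpa using this
  have h3 : (∫ τ in s..(s + δ), (f τ) ^ 2) ≤ ∫ τ in t..(t + Δ + δ), (f τ) ^ 2 := by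
    apply intervalIntegral.integral_mono_interval (hs.1) (by linarith) (by linarith [hs.2])
    · exact Filter.Eventually.of_forall (fun τ => sq_nonneg _)
    · exact (hf.pow 2).intervalIntegrable _ _
  have : (γ * ‖closedSpanProj k Ω g‖) ^ 2 ≤ δ * ∫ τ in t..(t + Δ + δ), (f τ) ^ 2 := by
    calc (γ * ‖closedSpanProj k Ω g‖) ^ 2 ≤ I ^ 2 := h1
      _ ≤ δ * ∫ τ in s..(s + δ), (f τ) ^ 2 := h2
      _ ≤ δ * ∫ τ in t..(t + Δ + δ), (f τ) ^ 2 :=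
          mul_le_mul_of_nonneg_left h3 hδ.le
  rw [div_mul_eq_mul_div, div_le_iff₀ hδ, mul_pow] at *
  linarith [this]
end

section
/- Let Ω = {y_1, …, y_N} ⊂ ℝ^d be a finite set and suppose H = span{k(y_1), …, k(y_N)} (so that P_Ω is the identity on H). Assume the trajectory x : [0,∞) → ℝ^d is uniformly continuous with image contained in a compact set, and that the family of functions {t ↦ ⟪k(x(t)), g⟫_H : g ∈ H, ‖g‖_H = 1} is uniformly equicontinuous. If x persistently excites Ω in the sense PE2, then x persistently excites Ω in the sense PE1. -/
open scoped RealInnerProductSpace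
open Filter MeasureTheory

lemma closedSpanProj_top {H : Type*} [NormedAddCommGroup H] [InnerProductSpace ℝ H]
    [CompleteSpace H] {d : ℕ} (k : EuclideanSpace ℝ (Fin d) → H)
    {N : ℕ} (y : Fin N → EuclideanSpace ℝ (Fin d))
    (hspan : Submodule.span ℝ (Set.range fun i => k (y i)) = ⊤) (g : H) :
    closedSpanProj k (Set.range y) g = g := by
  have h1 : k '' Set.range y = Set.range fun i => k (y i) := by
    rw [← Set.range_comp]; rfl
  have h2 : (Submodule.span ℝ (k '' Set.range y)).topologicalClosure = ⊤ := by
    rw [h1, hspan]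
    exact eq_top_iff.2 (Submodule.le_topologicalClosure ⊤)
  unfold closedSpanProj
  exact Submodule.starProjection_eq_self_iff.mpr (h2 ▸ Submodule.mem_top)

/-- For a finite set `Ω = {y 1, …, y N}` with `H = span {k (y i)}`, if the trajectory is
uniformly continuous with relatively compact image and the family
`{t ↦ ⟪k (x t), g⟫ : ‖g‖ = 1}` is uniformly equicontinuous, then PE2 implies PE1. -/
theorem pe2_implies_pe1_finite {H : Type*} [NormedAddCommGroup H] [InnerProductSpace ℝ H]
    [CompleteSpace H] {d : ℕ} (k : EuclideanSpace ℝ (Fin d) → H) (hk : Continuous k)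
    {N : ℕ} (y : Fin N → EuclideanSpace ℝ (Fin d))
    (hspan : Submodule.span ℝ (Set.range fun i => k (y i)) = ⊤)
    (x : ℝ → EuclideanSpace ℝ (Fin d)) (hxu : UniformContinuous x)
    (hcomp : ∃ C : Set (EuclideanSpace ℝ (Fin d)), IsCompact C ∧ ∀ t : ℝ, 0 ≤ t → x t ∈ C)
    (hequi : ∀ ε : ℝ, 0 < ε → ∃ η : ℝ, 0 < η ∧ ∀ g : H, ‖g‖ = 1 →
      ∀ s t : ℝ, |s - t| < η → |⟪k (x s), g⟫ - ⟪k (x t), g⟫| < ε)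
    (hPE2 : ∃ T₀ γ Δ : ℝ, 0 < T₀ ∧ 0 < γ ∧ 0 < Δ ∧
      ∀ t, T₀ ≤ t → ∀ g : H,
        γ * ‖closedSpanProj k (Set.range y) g‖ ^ 2 ≤
          ∫ τ in t..(t + Δ), (⟪k (x τ), g⟫) ^ 2) :
    ∃ T₀ γ δ Δ : ℝ, 0 < T₀ ∧ 0 < γ ∧ 0 < δ ∧ 0 < Δ ∧
      ∀ t, T₀ ≤ t → ∀ g : H, ∃ s ∈ Set.Icc t (t + Δ),
        γ * ‖closedSpanProj k (Set.range y) g‖ ≤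
          |(∫ τ in s..(s + δ), ⟪k (x τ), g⟫)| := by
  obtain ⟨T₀, γ₂, Δ, hT₀, hγ₂, hΔ, hPE⟩ := hPE2
  have hxc : Continuous x := hxu.continuous
  set c : ℝ := Real.sqrt (γ₂ / (2 * Δ)) with hc
  have hcpos : 0 < c := Real.sqrt_pos.2 (by positivity)
  obtain ⟨η, hη, hequi'⟩ := hequi (c / 2) (by positivity)
  refine ⟨T₀, (η / 2) * (c / 2), η / 2, Δ, hT₀, by positivity, by positivity, hΔ, ?_⟩
  intro t ht g
  rcases eq_or_ne g 0 with rfl | hg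
  · exact ⟨t, ⟨le_refl t, by linarith⟩, by simp [closedSpanProj_top k y hspan]⟩
  set u : H := ‖g‖⁻¹ • g with hu
  have hun : ‖u‖ = 1 := by
    rw [hu, norm_smul, norm_inv, norm_norm, inv_mul_cancel₀ (norm_ne_zero_iff.2 hg)]
  set f : ℝ → ℝ := fun τ => ⟪k (x τ), u⟫ with hf
  have hfc : Continuous f := (hk.comp hxc).inner continuous_const
  have hfc2 : Continuous (fun τ => f τ ^ 2) := hfc.pow 2
  have hcc : c ^ 2 = γ₂ / (2 * Δ) := Real.sq_sqrt (by positivity)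
  have hint : γ₂ ≤ ∫ τ in t..(t + Δ), f τ ^ 2 := by
    have h := hPE t ht u
    rwa [closedSpanProj_top k y hspan, hun, one_pow, mul_one] at h
  have hex : ∃ s ∈ Set.Icc t (t + Δ), c ≤ |f s| := by
    by_contra hcon
    push_neg at hcon
    have hle : (∫ τ in t..(t + Δ), f τ ^ 2) ≤ ∫ _ in t..(t + Δ), γ₂ / (2 * Δ) := by
      apply intervalIntegral.integral_mono_on (by linarith) (hfc2.intervalIntegrable _ _)
        intervalIntegrable_const
      intro s hs
      have h1 := hcon s hs
      have h2 : |f s| ^ 2 < c ^ 2 := pow_lt_pow_left₀ h1 (abs_nonneg _) (by norm_num)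
      rw [sq_abs] at h2
      linarith
    rw [intervalIntegral.integral_const, smul_eq_mul] at hle
    have heq : (t + Δ - t) * (γ₂ / (2 * Δ)) = γ₂ / 2 := by
      field_simp; ring
    rw [heq] at hle
    linarith
  obtain ⟨s, hs, hfs⟩ := hex
  refine ⟨s, hs, ?_⟩
  rw [closedSpanProj_top k y hspan]
  have hgn : (0:ℝ) < ‖g‖ := norm_pos_iff.2 hg
  have hrw : (∫ τ in s..(s + η / 2), ⟪k (x τ), g⟫) = ‖g‖ * ∫ τ in s..(s + η / 2), f τ := by
    rw [← intervalIntegral.integral_const_mul]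
    congr 1; funext τ
    show (⟪k (x τ), g⟫ : ℝ) = ‖g‖ * ⟪k (x τ), u⟫
    rw [hu, real_inner_smul_right]
    field_simp
  rw [hrw, abs_mul, abs_of_pos hgn, mul_comm (η / 2 * (c / 2)) ‖g‖]
  refine mul_le_mul_of_nonneg_left ?_ hgn.le
  -- key estimate
  have hmem : ∀ τ ∈ Set.Icc s (s + η / 2), |f τ - f s| < c / 2 := by
    intro τ hτ
    apply hequi' u hun τ s
    rw [abs_lt]
    constructor <;> [linarith [hτ.1]; linarith [hτ.2]]
  rcases le_abs.mp hfs with hpos | hneg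
  · -- f s ≥ c
    have hlow : ∀ τ ∈ Set.Icc s (s + η / 2), c / 2 ≤ f τ := by
      intro τ hτ
      have := abs_lt.mp (hmem τ hτ)
      linarith [this.1]
    have : (∫ _ in s..(s + η / 2), c / 2) ≤ ∫ τ in s..(s + η / 2), f τ := by
      apply intervalIntegral.integral_mono_on (by linarith) intervalIntegrable_const
        (hfc.intervalIntegrable _ _) hlow
    rw [intervalIntegral.integral_const, smul_eq_mul] at this
    have h2 : (s + η / 2 - s) * (c / 2) = η / 2 * (c / 2) := by ring
    rw [h2] at this
    calc η / 2 * (c / 2) ≤ ∫ τ in s..(s + η / 2), f τ := this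
      _ ≤ |∫ τ in s..(s + η / 2), f τ| := le_abs_self _
  · -- f s ≤ -c
    have hhigh : ∀ τ ∈ Set.Icc s (s + η / 2), f τ ≤ -(c / 2) := by
      intro τ hτ
      have := abs_lt.mp (hmem τ hτ)
      linarith [this.2]
    have : (∫ τ in s..(s + η / 2), f τ) ≤ ∫ _ in s..(s + η / 2), -(c / 2) := by
      apply intervalIntegral.integral_mono_on (by linarith) (hfc.intervalIntegrable _ _)
        intervalIntegrable_const hhigh
    rw [intervalIntegral.integral_const, smul_eq_mul] at this
    have h2 : (s + η / 2 - s) * -(c / 2) = -(η / 2 * (c / 2)) := by ring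
    rw [h2] at this
    calc η / 2 * (c / 2) ≤ -(∫ τ in s..(s + η / 2), f τ) := by linarith
      _ ≤ |∫ τ in s..(s + η / 2), f τ| := neg_le_abs _
end

section
/- Let x : [0,∞) → ℝ^d be a continuous trajectory whose image is contained in a compact set, and let ω⁺ := ⋂_{T ≥ 0} closure{x(t) : t ≥ T} denote its positive limit set. Suppose the RKHS separates closed sets: for every closed set A ⊆ ℝ^d and every b ∉ A there exists g ∈ H with ⟪k(a), g⟫_H = 0 for all a ∈ A and ⟪k(b), g⟫_H ≠ 0. If the trajectory x persistently excites a set Ω ⊆ ℝ^d in the sense PE2, then Ω ⊆ ω⁺. -/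
open scoped RealInnerProductSpace
open Filter MeasureTheory

/-- If the RKHS separates closed sets and the trajectory `x` (continuous, with relatively
compact forward image) persistently excites `Ω` in the sense PE2, then `Ω` is contained in
the positive limit set `ω⁺ = ⋂_{T ≥ 0} closure {x t : t ≥ T}`. -/
theorem pe_set_subset_positive_limit_set {H : Type*} [NormedAddCommGroup H]
    [InnerProductSpace ℝ H] [CompleteSpace H] {d : ℕ}
    (k : EuclideanSpace ℝ (Fin d) → H) (hk : Continuous k)
    (x : ℝ → EuclideanSpace ℝ (Fin d)) (hx : Continuous x)
    (hcomp : ∃ C : Set (EuclideanSpace ℝ (Fin d)), IsCompact C ∧ ∀ t : ℝ, 0 ≤ t → x t ∈ C)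
    (hsep : ∀ A : Set (EuclideanSpace ℝ (Fin d)), IsClosed A →
      ∀ b ∉ A, ∃ g : H, (∀ a ∈ A, ⟪k a, g⟫ = 0) ∧ ⟪k b, g⟫ ≠ 0)
    (Ω : Set (EuclideanSpace ℝ (Fin d)))
    (hPE2 : ∃ T₀ γ Δ : ℝ, 0 < T₀ ∧ 0 < γ ∧ 0 < Δ ∧
      ∀ t, T₀ ≤ t → ∀ g : H,
        γ * ‖closedSpanProj k Ω g‖ ^ 2 ≤ ∫ τ in t..(t + Δ), (⟪k (x τ), g⟫) ^ 2) :
    Ω ⊆ ⋂ T ∈ Set.Ici (0 : ℝ), closure (x '' Set.Ici T) := by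
  intro y hy
  simp only [Set.mem_iInter, Set.mem_Ici]
  intro T hT
  by_contra hyc
  obtain ⟨g, hg0, hgy⟩ := hsep (closure (x '' Set.Ici T)) isClosed_closure y hyc
  obtain ⟨T₀, γ, Δ, hT₀, hγ, hΔ, hPE⟩ := hPE2
  set t := max T₀ T with ht
  have h1 : Set.EqOn (fun τ => (⟪k (x τ), g⟫ : ℝ) ^ 2) (fun _ => (0:ℝ))
      (Set.uIcc t (t + Δ)) := by
    intro τ hτ
    have hτT : T ≤ τ := by
      rcases Set.mem_uIcc.mp hτ with h | h
      · exact le_trans (le_max_right _ _) h.1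
      · exact le_trans (le_max_right _ _) (le_trans (le_add_of_nonneg_right hΔ.le) h.1)
    have hmem : x τ ∈ closure (x '' Set.Ici T) := subset_closure ⟨τ, hτT, rfl⟩
    simp only
    rw [hg0 _ hmem]
    ring
  have hint : (∫ τ in t..(t+Δ), (⟪k (x τ), g⟫ : ℝ) ^ 2) = 0 := by
    rw [intervalIntegral.integral_congr h1]
    simp
  have hle := hPE t (le_max_left _ _) g
  rw [hint] at hle
  have hnorm : ‖closedSpanProj k Ω g‖ = 0 := by
    by_contra h
    have hp : 0 < ‖closedSpanProj k Ω g‖ := (norm_nonneg _).lt_of_ne (Ne.symm h)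
    nlinarith [mul_pos hγ (pow_pos hp 2)]
  have hP0 : closedSpanProj k Ω g = 0 := norm_eq_zero.mp hnorm
  haveI : CompleteSpace ((Submodule.span ℝ (k '' Ω)).topologicalClosure) :=
    (Submodule.isClosed_topologicalClosure _).completeSpace_coe
  have hky : k y ∈ (Submodule.span ℝ (k '' Ω)).topologicalClosure :=
    Submodule.le_topologicalClosure _ (Submodule.subset_span ⟨y, hy, rfl⟩)
  have horth := Submodule.sub_starProjection_mem_orthogonal
    (K := (Submodule.span ℝ (k '' Ω)).topologicalClosure) g
  have h2 : ⟪k y, g - ((Submodule.orthogonalProjectionOnto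
      ((Submodule.span ℝ (k '' Ω)).topologicalClosure) g : H))⟫ = 0 :=
    (Submodule.mem_orthogonal _ _).mp horth (k y) hky
  have hP0' : ((Submodule.orthogonalProjectionOnto
      ((Submodule.span ℝ (k '' Ω)).topologicalClosure) g : H)) = 0 := hP0
  rw [hP0', sub_zero] at h2
  exact hgy h2
end

section
/- Fix T > 0, a continuous trajectory x : [0,T] → ℝ^d, A ∈ ℝ^{d×d}, B ∈ ℝ^d, Γ > 0, and a symmetric positive-definite P ∈ ℝ^{d×d}. Let (P_n)_{n∈ℕ} be orthogonal projections of H onto closed subspaces H_n ⊆ H such that P_n g → g in H for every g ∈ H. Suppose the embedding into continuous functions on Ω ⊆ ℝ^d is uniform: there is C > 0 with sup_{y ∈ Ω} |⟪k(y), g⟫_H| ≤ C ‖g‖_H for all g ∈ H. Let (x̂, f̂) be differentiable curves in ℝ^d and H satisfying x̂'(t) = A x̂(t) + ⟪k(x(t)), f̂(t)⟫_H B and f̂'(t) = Γ⁻¹ (Bᵀ P (x(t) − x̂(t))) k(x(t)) on [0,T], and for each n let (x̂_n, f̂_n) with f̂_n(t) ∈ H_n satisfy x̂_n'(t) = A x̂_n(t)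 + ⟪k(x(t)), f̂_n(t)⟫_H B and f̂_n'(t) = Γ⁻¹ (Bᵀ P (x(t) − x̂_n(t))) P_n k(x(t)) on [0,T], with x̂_n(0) = x̂(0) and f̂_n(0) = P_n f̂(0). Then sup_{t ∈ [0,T]} ‖x̂(t) − x̂_n(t)‖_{ℝ^d} → 0 and sup_{t ∈ [0,T]} sup_{y ∈ Ω} |⟪k(y), f̂(t) − f̂_n(t)⟫_H| → 0 as n → ∞. -/
open scoped RealInnerProductSpace Matrix
open Filter MeasureTheory

/-- The orthogonal projection of `g` onto a closed subspace `K`. -/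
noncomputable def subProj {H : Type*} [NormedAddCommGroup H] [InnerProductSpace ℝ H]
    [CompleteSpace H] (K : Submodule ℝ H) (hK : IsClosed (K : Set H)) (g : H) : H :=
  haveI : CompleteSpace K := hK.completeSpace_coe
  (K.orthogonalProjectionOnto g : H)

lemma subProj_norm_le {H : Type*} [NormedAddCommGroup H] [InnerProductSpace ℝ H]
    [CompleteSpace H] (K : Submodule ℝ H) (hK : IsClosed (K : Set H)) (g : H) :
    ‖subProj K hK g‖ ≤ ‖g‖ := by
  haveI : CompleteSpace K := hK.completeSpace_coe
  calc ‖subProj K hK g‖ = ‖K.orthogonalProjectionOnto g‖ := rfl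
    _ ≤ ‖K.orthogonalProjectionOnto‖ * ‖g‖ := (K.orthogonalProjectionOnto).le_opNorm g
    _ ≤ 1 * ‖g‖ := mul_le_mul_of_nonneg_right (Submodule.orthogonalProjectionOnto_norm_le K) (norm_nonneg g)
    _ = ‖g‖ := one_mul _

lemma subProj_sub {H : Type*} [NormedAddCommGroup H] [InnerProductSpace ℝ H]
    [CompleteSpace H] (K : Submodule ℝ H) (hK : IsClosed (K : Set H)) (a b : H) :
    subProj K hK (a - b) = subProj K hK a - subProj K hK b := by
  haveI : CompleteSpace K := hK.completeSpace_coe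
  simp [subProj, map_sub]

lemma subProj_unif {H : Type*} [NormedAddCommGroup H] [InnerProductSpace ℝ H]
    [CompleteSpace H] (Hn : ℕ → Submodule ℝ H)
    (hHn : ∀ n, IsClosed ((Hn n : Submodule ℝ H) : Set H))
    (hproj : ∀ g : H, Tendsto (fun n => subProj (Hn n) (hHn n) g) atTop (nhds g))
    {S : Set H} (hS : IsCompact S) {η : ℝ} (hη : 0 < η) :
    ∃ N : ℕ, ∀ n ≥ N, ∀ s ∈ S, ‖s - subProj (Hn n) (hHn n) s‖ < η := by
  obtain ⟨F, hFfin, hFcov⟩ := (Metric.totallyBounded_iff.1 hS.totallyBounded) (η/4) (by linarith)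
  have hev : ∀ᶠ n in atTop, ∀ y ∈ F, ‖y - subProj (Hn n) (hHn n) y‖ < η/2 := by
    rw [hFfin.eventually_all]
    intro y _
    have := (hproj y).eventually (Metric.ball_mem_nhds y (show (0:ℝ) < η/2 by linarith))
    filter_upwards [this] with n hn
    rw [dist_eq_norm] at hn
    rwa [norm_sub_rev]
  obtain ⟨N, hN⟩ := eventually_atTop.1 hev
  refine ⟨N, fun n hn s hs => ?_⟩
  obtain ⟨y, hyF, hsy⟩ := Set.mem_iUnion₂.1 (hFcov hs)
  rw [Metric.mem_ball, dist_eq_norm] at hsy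
  have key : s - subProj (Hn n) (hHn n) s
      = ((s - y) - subProj (Hn n) (hHn n) (s - y)) + (y - subProj (Hn n) (hHn n) y) := by
    rw [subProj_sub]; abel
  have h1 : ‖(s - y) - subProj (Hn n) (hHn n) (s - y)‖
      ≤ ‖s - y‖ + ‖subProj (Hn n) (hHn n) (s - y)‖ := norm_sub_le _ _
  have h2 := subProj_norm_le (Hn n) (hHn n) (s - y)
  have h3 := hN n hn y hyF
  calc ‖s - subProj (Hn n) (hHn n) s‖
      ≤ ‖(s - y) - subProj (Hn n) (hHn n) (s - y)‖ + ‖y - subProj (Hn n) (hHn n) y‖ := by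
        rw [key]; exact norm_add_le _ _
    _ < η := by linarith


set_option maxHeartbeats 1000000 in
/-- Convergence of the finite-dimensional approximations of the adaptive estimator:
if `P_n g → g` for all `g` and the embedding into `C(Ω)` is uniform, then on any finite
horizon `[0, T]` the approximate state estimates converge uniformly to the
infinite-dimensional state estimate, and the approximate function estimates converge to
the infinite-dimensional function estimate uniformly on `Ω` and in time. -/
theorem estimator_approximation_convergence {H : Type*} [NormedAddCommGroup H]
    [InnerProductSpace ℝ H] [CompleteSpace H] {d : ℕ}
    (k : EuclideanSpace ℝ (Fin d) → H) (hk : Continuous k)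
    (T : ℝ) (hT : 0 < T)
    (x : ℝ → EuclideanSpace ℝ (Fin d)) (hx : Continuous x)
    (A : Matrix (Fin d) (Fin d) ℝ) (B : EuclideanSpace ℝ (Fin d))
    (Γ : ℝ) (hΓ : 0 < Γ)
    (P : Matrix (Fin d) (Fin d) ℝ) (hP : P.PosDef)
    (Hn : ℕ → Submodule ℝ H) (hHn : ∀ n, IsClosed ((Hn n : Submodule ℝ H) : Set H))
    (hproj : ∀ g : H, Tendsto (fun n => subProj (Hn n) (hHn n) g) atTop (nhds g))
    (Ω : Set (EuclideanSpace ℝ (Fin d)))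
    (C : ℝ) (hC : 0 < C)
    (hembed : ∀ g : H, ∀ y ∈ Ω, |⟪k y, g⟫| ≤ C * ‖g‖)
    (xhat : ℝ → EuclideanSpace ℝ (Fin d)) (fhat : ℝ → H)
    (hxhat : ∀ t ∈ Set.Icc (0 : ℝ) T,
      HasDerivAt xhat (Matrix.toEuclideanLin A (xhat t) + ⟪k (x t), fhat t⟫ • B) t)
    (hfhat : ∀ t ∈ Set.Icc (0 : ℝ) T,
      HasDerivAt fhat ((Γ⁻¹ * ⟪B, Matrix.toEuclideanLin P (x t - xhat t)⟫) • k (x t)) t)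
    (xhatn : ℕ → ℝ → EuclideanSpace ℝ (Fin d)) (fhatn : ℕ → ℝ → H)
    (hmem : ∀ n, ∀ t ∈ Set.Icc (0 : ℝ) T, fhatn n t ∈ Hn n)
    (hxhatn : ∀ n, ∀ t ∈ Set.Icc (0 : ℝ) T,
      HasDerivAt (xhatn n)
        (Matrix.toEuclideanLin A (xhatn n t) + ⟪k (x t), fhatn n t⟫ • B) t)
    (hfhatn : ∀ n, ∀ t ∈ Set.Icc (0 : ℝ) T,
      HasDerivAt (fhatn n)
        ((Γ⁻¹ * ⟪B, Matrix.toEuclideanLin P (x t - xhatn n t)⟫) •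
          subProj (Hn n) (hHn n) (k (x t))) t)
    (hx0 : ∀ n, xhatn n 0 = xhat 0)
    (hf0 : ∀ n, fhatn n 0 = subProj (Hn n) (hHn n) (fhat 0)) :
    (∀ ε : ℝ, 0 < ε → ∃ N : ℕ, ∀ n ≥ N, ∀ t ∈ Set.Icc (0 : ℝ) T,
      ‖xhat t - xhatn n t‖ < ε) ∧
    (∀ ε : ℝ, 0 < ε → ∃ N : ℕ, ∀ n ≥ N, ∀ t ∈ Set.Icc (0 : ℝ) T, ∀ y ∈ Ω,
      |⟪k y, fhat t - fhatn n t⟫| < ε) := by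
  classical
  have hΓi : (0:ℝ) ≤ Γ⁻¹ := inv_nonneg.2 hΓ.le
  set PC : EuclideanSpace ℝ (Fin d) →L[ℝ] EuclideanSpace ℝ (Fin d) :=
    LinearMap.toContinuousLinearMap (Matrix.toEuclideanLin P) with hPCdef
  set AC : EuclideanSpace ℝ (Fin d) →L[ℝ] EuclideanSpace ℝ (Fin d) :=
    LinearMap.toContinuousLinearMap (Matrix.toEuclideanLin A) with hACdef
  have hAbound : ∀ v, ‖Matrix.toEuclideanLin A v‖ ≤ ‖AC‖ * ‖v‖ := fun v => AC.le_opNorm v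
  have hPinner : ∀ v : EuclideanSpace ℝ (Fin d),
      |⟪B, Matrix.toEuclideanLin P v⟫| ≤ ‖B‖ * (‖PC‖ * ‖v‖) := by
    intro v
    have h1 := abs_real_inner_le_norm B (Matrix.toEuclideanLin P v)
    have h2 : ‖Matrix.toEuclideanLin P v‖ ≤ ‖PC‖ * ‖v‖ := PC.le_opNorm v
    nlinarith [norm_nonneg B]
  -- continuity of the four trajectories
  have hxhatC : ContinuousOn xhat (Set.Icc 0 T) := fun t ht =>
    ((hxhat t ht).continuousAt).continuousWithinAt
  have hfhatC : ContinuousOn fhat (Set.Icc 0 T) := fun t ht =>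
    ((hfhat t ht).continuousAt).continuousWithinAt
  have hxhatnC : ∀ n, ContinuousOn (xhatn n) (Set.Icc 0 T) := fun n t ht =>
    ((hxhatn n t ht).continuousAt).continuousWithinAt
  have hfhatnC : ∀ n, ContinuousOn (fhatn n) (Set.Icc 0 T) := fun n t ht =>
    ((hfhatn n t ht).continuousAt).continuousWithinAt
  -- bound on ‖k (x t)‖
  obtain ⟨K0', hK0'⟩ := IsCompact.exists_bound_of_continuousOn isCompact_Icc
    ((hk.comp hx).continuousOn : ContinuousOn (fun t => k (x t)) (Set.Icc 0 T))
  set K0 := max K0' 0 with hK0def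
  have hK0nn : (0:ℝ) ≤ K0 := le_max_right _ _
  have hK0 : ∀ t ∈ Set.Icc (0:ℝ) T, ‖k (x t)‖ ≤ K0 := fun t ht =>
    (hK0' t ht).trans (le_max_left _ _)
  -- bound on the coefficient of the infinite-dimensional learning law
  have hc1cont : ContinuousOn
      (fun t => Γ⁻¹ * ⟪B, Matrix.toEuclideanLin P (x t - xhat t)⟫) (Set.Icc 0 T) := by
    apply ContinuousOn.mul continuousOn_const
    exact ContinuousOn.inner continuousOn_const
      (PC.continuous.comp_continuousOn (hx.continuousOn.sub hxhatC))
  obtain ⟨M1', hM1'⟩ := IsCompact.exists_bound_of_continuousOn isCompact_Icc hc1cont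
  set M1 := max M1' 0 with hM1def
  have hM1nn : (0:ℝ) ≤ M1 := le_max_right _ _
  have hM1 : ∀ t ∈ Set.Icc (0:ℝ) T,
      |Γ⁻¹ * ⟪B, Matrix.toEuclideanLin P (x t - xhat t)⟫| ≤ M1 := by
    intro t ht
    have := hM1' t ht
    rw [Real.norm_eq_abs] at this
    exact this.trans (le_max_left _ _)
  set X := Γ⁻¹ * ‖B‖ * ‖PC‖ * K0 with hXdef
  have hXnn : (0:ℝ) ≤ X := by
    apply mul_nonneg (mul_nonneg (mul_nonneg hΓi (norm_nonneg _)) (norm_nonneg _)) hK0nn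
  set L := ‖AC‖ + K0 * ‖B‖ + X + 1 with hLdef
  have hL : 0 < L := by
    have h1 : (0:ℝ) ≤ ‖AC‖ := norm_nonneg _
    have h2 : (0:ℝ) ≤ K0 * ‖B‖ := mul_nonneg hK0nn (norm_nonneg _)
    linarith
  -- key uniform estimate
  have key : ∀ ε : ℝ, 0 < ε → ∃ N : ℕ, ∀ n ≥ N, ∀ t ∈ Set.Icc (0:ℝ) T,
      ‖xhat t - xhatn n t‖ < ε ∧ ‖fhat t - fhatn n t‖ < ε := by
    intro ε hε
    obtain ⟨c, hcdef⟩ : ∃ c : ℝ, c = Real.exp (L*T) + M1/L * (Real.exp (L*T) - 1) + 1 :=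
      ⟨_, rfl⟩
    have hexp1 : 1 ≤ Real.exp (L*T) := Real.one_le_exp (mul_nonneg hL.le hT.le)
    have hMLnn : (0:ℝ) ≤ M1 / L := div_nonneg hM1nn hL.le
    have hc : 0 < c := by
      have hm := mul_nonneg hMLnn (sub_nonneg.2 hexp1)
      rw [hcdef]; linarith [Real.exp_pos (L*T)]
    obtain ⟨η, hηdef⟩ : ∃ η : ℝ, η = ε / c := ⟨_, rfl⟩
    have hη : 0 < η := hηdef ▸ div_pos hε hc
    have hgbT : gronwallBound η L (M1*η) T < ε := by
      simp only [gronwallBound_of_K_ne_0 hL.ne']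
      have h1 : η * Real.exp (L*T) + (M1*η)/L * (Real.exp (L*T) - 1) = η * (c - 1) := by
        rw [hcdef]; ring
      have h2 : η * c = ε := by rw [hηdef]; exact div_mul_cancel₀ ε hc.ne'
      have h3 : η * (c - 1) = ε - η := by rw [mul_sub, mul_one, h2]
      linarith
    have hgbmono : ∀ t ∈ Set.Icc (0:ℝ) T,
        gronwallBound η L (M1*η) (t - 0) ≤ gronwallBound η L (M1*η) T := by
      intro t ht
      rw [sub_zero]
      simp only [gronwallBound_of_K_ne_0 hL.ne']
      have h1 : Real.exp (L*t) ≤ Real.exp (L*T) :=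
        Real.exp_le_exp.2 (mul_le_mul_of_nonneg_left ht.2 hL.le)
      have h2 : (0:ℝ) ≤ (M1*η)/L := div_nonneg (mul_nonneg hM1nn hη.le) hL.le
      have h3 := mul_le_mul_of_nonneg_left h1 hη.le
      have h4 := mul_le_mul_of_nonneg_left h1 h2
      linarith
    obtain ⟨N1, hN1⟩ := subProj_unif Hn hHn hproj
      (isCompact_Icc.image (hk.comp hx) :
        IsCompact ((fun t => k (x t)) '' Set.Icc (0:ℝ) T)) hη
    have hN2ev := (hproj (fhat 0)).eventually (Metric.ball_mem_nhds (fhat 0) hη)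
    obtain ⟨N2, hN2⟩ := eventually_atTop.1 hN2ev
    refine ⟨max N1 N2, fun n hn => ?_⟩
    have hn1 : N1 ≤ n := le_trans (le_max_left _ _) hn
    have hn2 : N2 ≤ n := le_trans (le_max_right _ _) hn
    set Pn : H → H := subProj (Hn n) (hHn n) with hPndef
    set u : ℝ → (EuclideanSpace ℝ (Fin d)) × H :=
      fun t => (xhat t - xhatn n t, fhat t - fhatn n t) with hudef
    set u' : ℝ → (EuclideanSpace ℝ (Fin d)) × H := fun t =>
      (Matrix.toEuclideanLin A (xhat t - xhatn n t) + ⟪k (x t), fhat t - fhatn n t⟫ • B,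
       (Γ⁻¹ * ⟪B, Matrix.toEuclideanLin P (x t - xhat t)⟫) • (k (x t) - Pn (k (x t)))
         + ((Γ⁻¹ * ⟪B, Matrix.toEuclideanLin P (x t - xhat t)⟫)
            - (Γ⁻¹ * ⟪B, Matrix.toEuclideanLin P (x t - xhatn n t)⟫)) • Pn (k (x t))) with hu'def
    have hucont : ContinuousOn u (Set.Icc 0 T) :=
      (hxhatC.sub (hxhatnC n)).prodMk (hfhatC.sub (hfhatnC n))
    have huderiv : ∀ t ∈ Set.Icc (0:ℝ) T, HasDerivAt u (u' t) t := by
      intro t ht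
      have h1 : HasDerivAt (fun s => xhat s - xhatn n s) (u' t).1 t := by
        have := (hxhat t ht).sub (hxhatn n t ht)
        refine this.congr_deriv ?_
        simp only [hu'def, map_sub, inner_sub_right, sub_smul]
        abel
      have h2 : HasDerivAt (fun s => fhat s - fhatn n s) (u' t).2 t := by
        have := (hfhat t ht).sub (hfhatn n t ht)
        refine this.congr_deriv ?_
        simp only [hu'def, hPndef, smul_sub, sub_smul]
        abel
      exact h1.prodMk h2
    have hbound : ∀ t ∈ Set.Ico (0:ℝ) T, ‖u' t‖ ≤ L * ‖u t‖ + M1 * η := by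
      intro t ht
      have htI : t ∈ Set.Icc (0:ℝ) T := ⟨ht.1, ht.2.le⟩
      have he1 : ‖xhat t - xhatn n t‖ ≤ ‖u t‖ := norm_fst_le (u t)
      have he2 : ‖fhat t - fhatn n t‖ ≤ ‖u t‖ := norm_snd_le (u t)
      have hunn : (0:ℝ) ≤ ‖u t‖ := norm_nonneg _
      have hkb := hK0 t htI
      have hPnk : ‖Pn (k (x t))‖ ≤ K0 := (subProj_norm_le _ _ _).trans hkb
      have hkPn : ‖k (x t) - Pn (k (x t))‖ ≤ η :=
        (hN1 n hn1 (k (x t)) (Set.mem_image_of_mem _ htI)).le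
      have hc1 := hM1 t htI
      have hc12 : |(Γ⁻¹ * ⟪B, Matrix.toEuclideanLin P (x t - xhat t)⟫)
            - (Γ⁻¹ * ⟪B, Matrix.toEuclideanLin P (x t - xhatn n t)⟫)|
          ≤ Γ⁻¹ * (‖B‖ * (‖PC‖ * ‖xhat t - xhatn n t‖)) := by
        have hdiff : (x t - xhat t) - (x t - xhatn n t) = xhatn n t - xhat t := by abel
        have heq : (Γ⁻¹ * ⟪B, Matrix.toEuclideanLin P (x t - xhat t)⟫)
            - (Γ⁻¹ * ⟪B, Matrix.toEuclideanLin P (x t - xhatn n t)⟫)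
            = Γ⁻¹ * ⟪B, Matrix.toEuclideanLin P (xhatn n t - xhat t)⟫ := by
          rw [← mul_sub, ← inner_sub_right, ← map_sub, hdiff]
        rw [heq, abs_mul, abs_of_nonneg hΓi]
        have h1 := hPinner (xhatn n t - xhat t)
        rw [norm_sub_rev] at h1
        exact mul_le_mul_of_nonneg_left h1 hΓi
      have hb1 : ‖(u' t).1‖ ≤ L * ‖u t‖ + M1 * η := by
        have h0 : ‖(u' t).1‖ ≤ ‖Matrix.toEuclideanLin A (xhat t - xhatn n t)‖
            + ‖⟪k (x t), fhat t - fhatn n t⟫ • B‖ := norm_add_le _ _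
        have hA := hAbound (xhat t - xhatn n t)
        have hin : ‖⟪k (x t), fhat t - fhatn n t⟫ • B‖ ≤ K0 * ‖B‖ * ‖u t‖ := by
          rw [norm_smul, Real.norm_eq_abs]
          have h1 := abs_real_inner_le_norm (k (x t)) (fhat t - fhatn n t)
          have s1 : |⟪k (x t), fhat t - fhatn n t⟫| ≤ K0 * ‖u t‖ :=
            h1.trans (mul_le_mul hkb he2 (norm_nonneg _) hK0nn)
          calc |⟪k (x t), fhat t - fhatn n t⟫| * ‖B‖ ≤ (K0 * ‖u t‖) * ‖B‖ :=
                mul_le_mul_of_nonneg_right s1 (norm_nonneg _)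
            _ = K0 * ‖B‖ * ‖u t‖ := by ring
        have hAu : ‖AC‖ * ‖xhat t - xhatn n t‖ ≤ ‖AC‖ * ‖u t‖ :=
          mul_le_mul_of_nonneg_left he1 (norm_nonneg _)
        have hX1 : (0:ℝ) ≤ (X + 1) * ‖u t‖ := mul_nonneg (by linarith) hunn
        have hMη : (0:ℝ) ≤ M1 * η := mul_nonneg hM1nn hη.le
        have expand : (‖AC‖ + K0 * ‖B‖ + X + 1) * ‖u t‖
            = ‖AC‖ * ‖u t‖ + K0 * ‖B‖ * ‖u t‖ + (X + 1) * ‖u t‖ := by ring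
        rw [hLdef]
        linarith
      have hb2 : ‖(u' t).2‖ ≤ L * ‖u t‖ + M1 * η := by
        have h0 : ‖(u' t).2‖ ≤
            ‖(Γ⁻¹ * ⟪B, Matrix.toEuclideanLin P (x t - xhat t)⟫) • (k (x t) - Pn (k (x t)))‖
            + ‖((Γ⁻¹ * ⟪B, Matrix.toEuclideanLin P (x t - xhat t)⟫)
               - (Γ⁻¹ * ⟪B, Matrix.toEuclideanLin P (x t - xhatn n t)⟫)) • Pn (k (x t))‖ :=
          norm_add_le _ _
        rw [norm_smul, norm_smul, Real.norm_eq_abs, Real.norm_eq_abs] at h0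
        have ht1 : |Γ⁻¹ * ⟪B, Matrix.toEuclideanLin P (x t - xhat t)⟫|
            * ‖k (x t) - Pn (k (x t))‖ ≤ M1 * η :=
          mul_le_mul hc1 hkPn (norm_nonneg _) hM1nn
        have ht2 : |(Γ⁻¹ * ⟪B, Matrix.toEuclideanLin P (x t - xhat t)⟫)
              - (Γ⁻¹ * ⟪B, Matrix.toEuclideanLin P (x t - xhatn n t)⟫)| * ‖Pn (k (x t))‖
            ≤ (Γ⁻¹ * (‖B‖ * (‖PC‖ * ‖u t‖))) * K0 := by
          have hrhs : Γ⁻¹ * (‖B‖ * (‖PC‖ * ‖xhat t - xhatn n t‖))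
              ≤ Γ⁻¹ * (‖B‖ * (‖PC‖ * ‖u t‖)) := by
            apply mul_le_mul_of_nonneg_left _ hΓi
            apply mul_le_mul_of_nonneg_left _ (norm_nonneg _)
            exact mul_le_mul_of_nonneg_left he1 (norm_nonneg _)
          exact mul_le_mul (hc12.trans hrhs) hPnk (norm_nonneg _)
            (mul_nonneg hΓi (mul_nonneg (norm_nonneg _) (mul_nonneg (norm_nonneg _) hunn)))
        have hXu : (Γ⁻¹ * (‖B‖ * (‖PC‖ * ‖u t‖))) * K0 = X * ‖u t‖ := by
          rw [hXdef]; ring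
        have hrest : (0:ℝ) ≤ (‖AC‖ + K0 * ‖B‖ + 1) * ‖u t‖ := by
          have hn1 : (0:ℝ) ≤ ‖AC‖ := norm_nonneg _
          have hn2 : (0:ℝ) ≤ K0 * ‖B‖ := mul_nonneg hK0nn (norm_nonneg _)
          exact mul_nonneg (by linarith) hunn
        have expand : (‖AC‖ + K0 * ‖B‖ + X + 1) * ‖u t‖
            = X * ‖u t‖ + (‖AC‖ + K0 * ‖B‖ + 1) * ‖u t‖ := by ring
        rw [hLdef]
        linarith
      calc ‖u' t‖ = max ‖(u' t).1‖ ‖(u' t).2‖ := Prod.norm_def _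
        _ ≤ L * ‖u t‖ + M1 * η := max_le hb1 hb2
    have hu0 : ‖u 0‖ ≤ η := by
      have hval : u 0 = (0, fhat 0 - Pn (fhat 0)) := by
        simp only [hudef, hPndef, hx0 n, hf0 n, sub_self]
      have hf0n : ‖fhat 0 - Pn (fhat 0)‖ ≤ η := by
        have := hN2 n hn2
        rw [dist_eq_norm] at this
        rw [norm_sub_rev]
        exact this.le
      rw [hval, Prod.norm_def]
      exact max_le (by simpa using hη.le) hf0n
    have hgr := norm_le_gronwallBound_of_norm_deriv_right_le hucont
      (fun s hs => (huderiv s ⟨hs.1, hs.2.le⟩).hasDerivWithinAt) hu0 hbound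
    intro t ht
    have h1 := hgr t ht
    have h2 := hgbmono t ht
    have h3 : ‖u t‖ < ε := lt_of_le_of_lt (h1.trans h2) hgbT
    exact ⟨lt_of_le_of_lt (norm_fst_le (u t)) h3, lt_of_le_of_lt (norm_snd_le (u t)) h3⟩
  constructor
  · intro ε hε
    obtain ⟨N, hN⟩ := key ε hε
    exact ⟨N, fun n hn t ht => (hN n hn t ht).1⟩
  · intro ε hε
    obtain ⟨N, hN⟩ := key (ε / C) (div_pos hε hC)
    refine ⟨N, fun n hn t ht y hy => ?_⟩
    calc |⟪k y, fhat t - fhatn n t⟫| ≤ C * ‖fhat t - fhatn n t‖ := hembed _ y hy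
      _ < C * (ε / C) := by
        exact mul_lt_mul_of_pos_left (hN n hn t ht).2 hC
      _ = ε := mul_div_cancel₀ ε hC.ne'
end

section
/- Let K(y,z) = φ(‖y − z‖) with φ : [0,∞) → ℝ continuous be a positive-definite radial kernel with feature map k : ℝ^d → H (so ⟪k(y), k(z)⟫_H = φ(‖y − z‖), and the Gram matrix of any finite set of distinct points is positive definite). Let x_1, …, x_n ∈ ℝ^d be distinct kernel centers and x : [0,∞) → ℝ^d a continuous trajectory. Then there exists ε̄ with 0 < ε̄ < (1/2) min_{i≠j} ‖x_i − x_j‖ such that the following holds: if for some ε ∈ (0, ε̄] there exist δ > 0 and c > 0 such that for every t₀ ≥ 0 and every i ∈ {1,…,n} the Lebesgue measure of I_i := {t ∈ [t₀, t₀+δ] : ‖x(t) − x_i‖ ≤ ε} is at least c, then the finite-dimensional space H_n := span{k(x_1), …, k(x_n)} is persistently excited in the sense PE2: there exist γ > 0 and Δ > 0 such that ∫_t^{t+Δ} ⟪k(x(τ)), g⟫_H² dτ ≥ γ ‖g‖_H² for all t ≥ 0 and all g ∈ H_n. -/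
open scoped RealInnerProductSpace
open Filter MeasureTheory

set_option maxHeartbeats 1000000 in
/-- Sufficient condition for persistence of excitation: for a radial positive-definite
kernel and distinct centers `x_1, …, x_n`, there is `ε̄ < (1/2) min_{i≠j} ‖x_i − x_j‖`
such that if for some `ε ∈ (0, ε̄]` the trajectory dwells in the `ε`-ball around every
center for a uniformly positive amount of time `c` within every window of length `δ`,
then `span {k (x_i)}` is persistently excited in the sense PE2. -/
theorem sufficient_condition_for_PE {H : Type*} [NormedAddCommGroup H]
    [InnerProductSpace ℝ H] [CompleteSpace H] {d n : ℕ}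
    (k : EuclideanSpace ℝ (Fin d) → H)
    (φ : ℝ → ℝ) (hφ : Continuous φ)
    (hker : ∀ y z : EuclideanSpace ℝ (Fin d), ⟪k y, k z⟫ = φ ‖y - z‖)
    (hposdef : ∀ (m : ℕ) (p : Fin m → EuclideanSpace ℝ (Fin d)), Function.Injective p →
      (Matrix.of fun i j => ⟪k (p i), k (p j)⟫).PosDef)
    (xc : Fin n → EuclideanSpace ℝ (Fin d)) (hxc : Function.Injective xc)
    (x : ℝ → EuclideanSpace ℝ (Fin d)) (hx : Continuous x) :
    ∃ εbar : ℝ, 0 < εbar ∧ (∀ i j, i ≠ j → εbar < ‖xc i - xc j‖ / 2) ∧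
      ∀ ε : ℝ, 0 < ε → ε ≤ εbar →
        ∀ δ c : ℝ, 0 < δ → 0 < c →
          (∀ t₀ : ℝ, 0 ≤ t₀ → ∀ i : Fin n,
            ENNReal.ofReal c ≤
              volume {t : ℝ | t ∈ Set.Icc t₀ (t₀ + δ) ∧ ‖x t - xc i‖ ≤ ε}) →
          ∃ γ Δ : ℝ, 0 < γ ∧ 0 < Δ ∧
            ∀ t : ℝ, 0 ≤ t → ∀ g ∈ Submodule.span ℝ (Set.range fun i => k (xc i)),
              γ * ‖g‖ ^ 2 ≤ ∫ τ in t..(t + Δ), (⟪k (x τ), g⟫) ^ 2 := by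

  set V : Submodule ℝ H := Submodule.span ℝ (Set.range fun i => k (xc i)) with hVdef
  haveI : FiniteDimensional ℝ V := FiniteDimensional.span_of_finite ℝ (Set.finite_range _)
  -- the evaluation map at the centers
  set T : H →ₗ[ℝ] EuclideanSpace ℝ (Fin n) :=
    { toFun := fun g => (WithLp.toLp 2 (fun i => ⟪k (xc i), g⟫) : EuclideanSpace ℝ (Fin n))
      map_add' := by intro a b; ext i; simp [inner_add_right]
      map_smul' := by intro r a; ext i; simp [inner_smul_right] } with hTdef
  set L : V →ₗ[ℝ] EuclideanSpace ℝ (Fin n) := T.comp V.subtype with hLdef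
  have hLker : ∀ z : V, L z = 0 → z = 0 := by
    intro z hz
    have hz' : ∀ i, ⟪k (xc i), (z : H)⟫ = 0 := by
      intro i
      have := congrArg (fun v : EuclideanSpace ℝ (Fin n) => v i) hz
      simpa [hLdef, hTdef] using this
    have horth : ∀ y ∈ V, ⟪y, (z : H)⟫ = 0 := by
      intro y hy
      induction hy using Submodule.span_induction with
      | mem y hy => obtain ⟨i, rfl⟩ := hy; exact hz' i
      | zero => simp
      | add a b ha hb iha ihb => rw [inner_add_left, iha, ihb]; ring
      | smul r a ha iha => rw [real_inner_smul_left, iha]; ring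
    have h0 : ⟪(z : H), (z : H)⟫ = 0 := horth _ z.2
    exact Subtype.ext (inner_self_eq_zero.mp h0)
  have hLinj : Function.Injective L :=
    LinearMap.ker_eq_bot.mp (LinearMap.ker_eq_bot'.mpr hLker)
  obtain ⟨K, hKpos, hK⟩ := (LinearMap.injective_iff_antilipschitz L).mp hLinj
  have hbound : ∀ z : V, ‖(z : H)‖ ≤ (K : ℝ) * ‖L z‖ := by
    intro z
    have := hK.le_mul_dist z 0
    simpa [dist_eq_norm, map_zero] using this
  have hKpos' : (0 : ℝ) < (K : ℝ) := by exact_mod_cast hKpos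
  have hsqrtpos : (0 : ℝ) < Real.sqrt (n + 1) := Real.sqrt_pos.mpr (by positivity)
  set σ : ℝ := 1 / ((K : ℝ) * Real.sqrt (n + 1)) with hσdef
  have hσpos : 0 < σ := by positivity
  -- key: some coordinate of L z is large
  have hkey : ∀ z : V, z ≠ 0 → ∃ i : Fin n, σ * ‖(z : H)‖ ≤ |(L z) i| := by
    intro z hz
    have hzpos : 0 < ‖(z : H)‖ := by
      rw [norm_pos_iff]
      exact fun h => hz (Subtype.ext h)
    have hLzpos : 0 < ‖L z‖ := by
      by_contra h
      push_neg at h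
      nlinarith [hbound z, hzpos, hKpos', norm_nonneg (L z)]
    have hjex : ∃ j : Fin n, (L z) j ≠ 0 := by
      by_contra h
      push_neg at h
      have : L z = 0 := by
        ext j
        exact h j
      rw [this] at hLzpos
      simp at hLzpos
    obtain ⟨j, hj⟩ := hjex
    obtain ⟨i, -, hi⟩ := Finset.exists_max_image Finset.univ
      (fun i => |(L z) i|) ⟨j, Finset.mem_univ j⟩
    have h1 : ‖L z‖ ^ 2 ≤ (n + 1) * ((L z) i) ^ 2 := by
      have hnorm : ‖L z‖ = Real.sqrt (∑ b : Fin n, ‖(L z) b‖ ^ 2) :=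
        EuclideanSpace.norm_eq (L z)
      rw [hnorm, Real.sq_sqrt (by positivity)]
      calc (∑ b : Fin n, ‖(L z) b‖ ^ 2)
          ≤ ∑ _b : Fin n, |(L z) i| ^ 2 := by
            refine Finset.sum_le_sum fun b _ => ?_
            rw [Real.norm_eq_abs]
            exact pow_le_pow_left₀ (abs_nonneg _) (hi b (Finset.mem_univ b)) 2
        _ = (n : ℝ) * |(L z) i| ^ 2 := by
            simp [Finset.sum_const, Finset.card_univ, mul_comm]
        _ ≤ (n + 1) * ((L z) i) ^ 2 := by
            rw [sq_abs]
            nlinarith [sq_nonneg ((L z) i)]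
    have h2 : ‖L z‖ ≤ Real.sqrt (n + 1) * |(L z) i| := by
      have := Real.sqrt_le_sqrt h1
      rw [Real.sqrt_sq (norm_nonneg _)] at this
      calc ‖L z‖ ≤ Real.sqrt ((n + 1) * ((L z) i) ^ 2) := this
        _ = Real.sqrt (n + 1) * |(L z) i| := by
            rw [Real.sqrt_mul (by positivity), Real.sqrt_sq_eq_abs]
    refine ⟨i, ?_⟩
    have h3 : ‖(z : H)‖ ≤ (K : ℝ) * (Real.sqrt (n + 1) * |(L z) i|) :=
      le_trans (hbound z) (mul_le_mul_of_nonneg_left h2 hKpos'.le)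
    have hpos : 0 < (K : ℝ) * Real.sqrt (n + 1) := by positivity
    calc σ * ‖(z : H)‖ = ‖(z : H)‖ / ((K : ℝ) * Real.sqrt (n + 1)) := by
          rw [hσdef]; ring
      _ ≤ |(L z) i| := by
          rw [div_le_iff₀ hpos]
          calc ‖(z : H)‖ ≤ (K : ℝ) * (Real.sqrt (↑n + 1) * |(L z) i|) := h3
            _ = |(L z) i| * ((K : ℝ) * Real.sqrt (↑n + 1)) := by ring
  -- the radial profile of the feature-map distance
  have hknorm : ∀ y w : EuclideanSpace ℝ (Fin d),
      ‖k y - k w‖ ^ 2 = 2 * φ 0 - 2 * φ ‖y - w‖ := by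
    intro y w
    have h1 : ⟪k y, k y⟫ = φ 0 := by simpa using hker y y
    have h2 : ⟪k w, k w⟫ = φ 0 := by simpa using hker w w
    have h3 := hker y w
    have h1' : ‖k y‖ ^ 2 = φ 0 := (real_inner_self_eq_norm_sq _).symm.trans h1
    have h2' : ‖k w‖ ^ 2 = φ 0 := (real_inner_self_eq_norm_sq _).symm.trans h2
    rw [norm_sub_sq_real, h1', h2', h3]; ring
  have hψcont : Continuous fun r : ℝ => 2 * φ 0 - 2 * φ r :=
    continuous_const.sub (continuous_const.mul hφ)
  -- continuity of the feature map
  have hkcont : Continuous k := by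
    rw [Metric.continuous_iff]
    intro y r hr
    obtain ⟨δ', hδ'pos, hδ'⟩ := Metric.continuous_iff.mp hψcont 0 (r ^ 2) (by positivity)
    refine ⟨δ', hδ'pos, fun y' hy' => ?_⟩
    have hd : dist ‖y' - y‖ (0 : ℝ) < δ' := by
      rw [Real.dist_eq, sub_zero, abs_of_nonneg (norm_nonneg _)]
      rwa [dist_eq_norm] at hy'
    have hlt := hδ' ‖y' - y‖ hd
    rw [Real.dist_eq] at hlt
    have habs := (abs_lt.mp hlt).2
    have heq := hknorm y' y
    rw [dist_eq_norm]
    nlinarith [norm_nonneg (k y' - k y), hr]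
  -- choose δ₀ for the threshold σ²/4
  obtain ⟨δ₀, hδ₀pos, hδ₀⟩ := Metric.continuous_iff.mp hψcont 0 (σ ^ 2 / 4) (by positivity)
  -- lower bound for pairwise distances
  obtain ⟨m, hmpos, hm⟩ : ∃ m : ℝ, 0 < m ∧ ∀ i j, i ≠ j → m < ‖xc i - xc j‖ / 2 := by
    by_cases hn : ∃ p : Fin n × Fin n, p.1 ≠ p.2
    · obtain ⟨p₀, hp₀⟩ := hn
      have hs : (Finset.univ.filter (fun p : Fin n × Fin n => p.1 ≠ p.2)).Nonempty :=
        ⟨p₀, by simp [hp₀]⟩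
      obtain ⟨q, hq, hqmin⟩ :=
        Finset.exists_min_image _ (fun p => ‖xc p.1 - xc p.2‖ / 2) hs
      have hqne : q.1 ≠ q.2 := (Finset.mem_filter.mp hq).2
      have hqpos : 0 < ‖xc q.1 - xc q.2‖ / 2 := by
        have h1 : xc q.1 - xc q.2 ≠ 0 := sub_ne_zero.mpr (fun h => hqne (hxc h))
        have := norm_pos_iff.mpr h1; linarith
      refine ⟨‖xc q.1 - xc q.2‖ / 2 / 2, by linarith, fun i j hij => ?_⟩
      have := hqmin (i, j) (by simp [hij])
      linarith
    · exact ⟨1, one_pos, fun i j hij => absurd ⟨(i, j), hij⟩ hn⟩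
  refine ⟨min (δ₀ / 2) m, by positivity,
    fun i j hij => lt_of_le_of_lt (min_le_right _ _) (hm i j hij), ?_⟩
  intro ε hε hεbar δ c hδ hc hdwell
  refine ⟨c * σ ^ 2 / 4, δ, by positivity, hδ, ?_⟩
  intro t ht g hg
  by_cases hg0 : g = 0
  · simp [hg0]
  set z : V := ⟨g, hg⟩ with hzdef
  have hzne : z ≠ 0 := fun h => hg0 (by simpa [hzdef] using congrArg Subtype.val h)
  obtain ⟨i, hi⟩ := hkey z hzne
  have hf : Continuous fun τ => ⟪k (x τ), g⟫ :=
    Continuous.inner (hkcont.comp hx) continuous_const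
  -- the dwell set
  set S : Set ℝ := {τ : ℝ | τ ∈ Set.Icc t (t + δ) ∧ ‖x τ - xc i‖ ≤ ε} with hSdef
  have hS : ENNReal.ofReal c ≤ volume S := hdwell t ht i
  set S' : Set ℝ := S ∩ Set.Ioc t (t + δ) with hS'def
  have hclosed : IsClosed {τ : ℝ | ‖x τ - xc i‖ ≤ ε} :=
    isClosed_le ((hx.sub continuous_const).norm) continuous_const
  have hSmeas : MeasurableSet S := (isClosed_Icc.inter hclosed).measurableSet
  have hS'meas : MeasurableSet S' := hSmeas.inter measurableSet_Ioc
  have hSsub : S ⊆ S' ∪ {t} := by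
    intro τ hτ
    by_cases hτt : τ = t
    · right; simp [hτt]
    · left
      exact ⟨hτ, lt_of_le_of_ne hτ.1.1 (Ne.symm hτt), hτ.1.2⟩
  have hvol : ENNReal.ofReal c ≤ volume S' := by
    calc ENNReal.ofReal c ≤ volume S := hS
      _ ≤ volume (S' ∪ {t}) := measure_mono hSsub
      _ ≤ volume S' + volume {t} := measure_union_le _ _
      _ = volume S' := by simp
  have hS'fin : volume S' ≠ ⊤ :=
    ne_top_of_le_ne_top (by simp [Real.volume_Ioc]) (measure_mono Set.inter_subset_right)
  have hc' : c ≤ (volume S').toReal :=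
    (ENNReal.ofReal_le_iff_le_toReal hS'fin).mp hvol
  -- pointwise lower bound on S'
  have hpoint : ∀ τ ∈ S', (σ / 2 * ‖g‖) ^ 2 ≤ ⟪k (x τ), g⟫ ^ 2 := by
    intro τ hτ
    have hr : ‖x τ - xc i‖ ≤ ε := hτ.1.2
    have hεδ : ε ≤ δ₀ / 2 := le_trans hεbar (min_le_left _ _)
    have hd : dist ‖x τ - xc i‖ (0 : ℝ) < δ₀ := by
      rw [Real.dist_eq, sub_zero, abs_of_nonneg (norm_nonneg _)]
      linarith
    have hlt := hδ₀ ‖x τ - xc i‖ hd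
    rw [Real.dist_eq] at hlt
    have habs := (abs_lt.mp hlt).2
    have heq := hknorm (x τ) (xc i)
    have hksmall : ‖k (x τ) - k (xc i)‖ ≤ σ / 2 := by
      nlinarith [norm_nonneg (k (x τ) - k (xc i)), hσpos]
    set e : ℝ := ⟪k (x τ) - k (xc i), g⟫ with hedef
    set v : ℝ := ⟪k (xc i), g⟫ with hvdef
    have he : |e| ≤ σ / 2 * ‖g‖ := by
      calc |e| ≤ ‖k (x τ) - k (xc i)‖ * ‖g‖ := abs_real_inner_le_norm _ _
        _ ≤ σ / 2 * ‖g‖ := mul_le_mul_of_nonneg_right hksmall (norm_nonneg _)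
    have hvlb : σ * ‖g‖ ≤ |v| := hi
    have hsum : ⟪k (x τ), g⟫ = v + e := by
      rw [hvdef, hedef, inner_sub_left]; ring
    have h4 : |v| ≤ |v + e| + |e| := by
      have := abs_add_le (v + e) (-e)
      simpa using this
    have h5 : σ / 2 * ‖g‖ ≤ |v + e| := by linarith
    calc (σ / 2 * ‖g‖) ^ 2 ≤ |v + e| ^ 2 := pow_le_pow_left₀ (by positivity) h5 2
      _ = (v + e) ^ 2 := sq_abs _
      _ = ⟪k (x τ), g⟫ ^ 2 := by rw [hsum]
  have hint : IntegrableOn (fun τ => ⟪k (x τ), g⟫ ^ 2) (Set.Ioc t (t + δ)) volume :=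
    (hf.pow 2).integrableOn_Ioc
  calc c * σ ^ 2 / 4 * ‖g‖ ^ 2 = (σ / 2 * ‖g‖) ^ 2 * c := by ring
    _ ≤ (σ / 2 * ‖g‖) ^ 2 * (volume S').toReal :=
        mul_le_mul_of_nonneg_left hc' (by positivity)
    _ ≤ ∫ τ in S', ⟪k (x τ), g⟫ ^ 2 :=
        by have := setIntegral_ge_of_const_le_real hS'meas hS'fin hpoint
             (hint.mono_set Set.inter_subset_right)
           exact this
    _ ≤ ∫ τ in Set.Ioc t (t + δ), ⟪k (x τ), g⟫ ^ 2 :=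
        setIntegral_mono_set hint (ae_of_all _ fun τ => sq_nonneg _)
          (HasSubset.Subset.eventuallyLE Set.inter_subset_right)
    _ = ∫ τ in t..(t + δ), ⟪k (x τ), g⟫ ^ 2 :=
        (intervalIntegral.integral_of_le (by linarith)).symm
end

section
/- Let (x̃, f̃) be a solution of the error system. Then the Lyapunov function V(t) := x̃(t)ᵀ P x̃(t) + Γ ‖f̃(t)‖²_H is differentiable on [0,∞) with V'(t) = −x̃(t)ᵀ Q x̃(t) for all t ≥ 0; in particular V is nonincreasing. -/
open scoped RealInnerProductSpace Matrix
open Filter MeasureTheory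

/-- The Lyapunov function `V(t) = x̃(t)ᵀ P x̃(t) + Γ ‖f̃(t)‖²` of the error system is
differentiable with `V'(t) = −x̃(t)ᵀ Q x̃(t)`; in particular `V` is nonincreasing on
`[0, ∞)`. -/
theorem lyapunov_derivative {H : Type*} [NormedAddCommGroup H]
    [InnerProductSpace ℝ H] [CompleteSpace H] {d : ℕ}
    (k : EuclideanSpace ℝ (Fin d) → H) (hk : Continuous k)
    (A : Matrix (Fin d) (Fin d) ℝ) (B : EuclideanSpace ℝ (Fin d))
    (Γ : ℝ) (hΓ : 0 < Γ)
    (P Q : Matrix (Fin d) (Fin d) ℝ) (hP : P.PosDef) (hQ : Q.PosDef)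
    (hLyap : Aᵀ * P + P * A = -Q)
    (x : ℝ → EuclideanSpace ℝ (Fin d)) (hx : Continuous x)
    (xt : ℝ → EuclideanSpace ℝ (Fin d)) (ft : ℝ → H)
    (hxt : ∀ t : ℝ, 0 ≤ t →
      HasDerivAt xt (Matrix.toEuclideanLin A (xt t) + ⟪k (x t), ft t⟫ • B) t)
    (hft : ∀ t : ℝ, 0 ≤ t →
      HasDerivAt ft (-(Γ⁻¹ * ⟪B, Matrix.toEuclideanLin P (xt t)⟫) • k (x t)) t) :
    (∀ t : ℝ, 0 ≤ t →
      HasDerivAt (fun s => ⟪xt s, Matrix.toEuclideanLin P (xt s)⟫ + Γ * ‖ft s‖ ^ 2)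
        (-⟪xt t, Matrix.toEuclideanLin Q (xt t)⟫) t) ∧
    AntitoneOn (fun s => ⟪xt s, Matrix.toEuclideanLin P (xt s)⟫ + Γ * ‖ft s‖ ^ 2)
      (Set.Ici (0 : ℝ)) := by
  have key : ∀ (M : Matrix (Fin d) (Fin d) ℝ) (u v : EuclideanSpace ℝ (Fin d)),
      ⟪Matrix.toEuclideanLin M u, v⟫ = ⟪u, Matrix.toEuclideanLin Mᵀ v⟫ := by
    intro M u v
    simp only [PiLp.inner_apply, Matrix.toEuclideanLin_apply, RCLike.inner_apply,
      starRingEnd_apply, star_trivial, WithLp.ofLp_toLp,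
      Matrix.mulVec,
      dotProduct, Matrix.transpose_apply, Finset.sum_mul, Finset.mul_sum]
    rw [Finset.sum_comm]
    exact Finset.sum_congr rfl fun i _ => Finset.sum_congr rfl fun j _ => by ring
  have LMN : ∀ (M N : Matrix (Fin d) (Fin d) ℝ) (v : EuclideanSpace ℝ (Fin d)),
      Matrix.toEuclideanLin (M * N) v = Matrix.toEuclideanLin M (Matrix.toEuclideanLin N v) := by
    intro M N v
    simp [Matrix.toEuclideanLin_apply, Matrix.mulVec_mulVec]
  have hPsym : Pᵀ = P := by
    have := hP.isHermitian
    simpa [Matrix.IsHermitian, Matrix.conjTranspose_eq_transpose_of_trivial] using this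
  have main : ∀ t : ℝ, 0 ≤ t →
      HasDerivAt (fun s => ⟪xt s, Matrix.toEuclideanLin P (xt s)⟫ + Γ * ‖ft s‖ ^ 2)
        (-⟪xt t, Matrix.toEuclideanLin Q (xt t)⟫) t := by
    intro t ht
    set y := xt t with hy
    set f := ft t with hf
    set y' := Matrix.toEuclideanLin A y + ⟪k (x t), f⟫ • B with hy'
    set f' := -(Γ⁻¹ * ⟪B, Matrix.toEuclideanLin P y⟫) • k (x t) with hf'
    have hLP : HasDerivAt (fun s => Matrix.toEuclideanLin P (xt s))
        (Matrix.toEuclideanLin P (Matrix.toEuclideanLin A y) +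
          ⟪k (x t), f⟫ • Matrix.toEuclideanLin P B) t := by
      have := (LinearMap.toContinuousLinearMap
        (Matrix.toEuclideanLin P)).hasFDerivAt.comp_hasDerivAt t (hxt t ht)
      simpa [Function.comp_def] using this
    have h1 : HasDerivAt (fun s => ⟪xt s, Matrix.toEuclideanLin P (xt s)⟫)
        (⟪y, Matrix.toEuclideanLin P (Matrix.toEuclideanLin A y) +
            ⟪k (x t), f⟫ • Matrix.toEuclideanLin P B⟫ +
          ⟪y', Matrix.toEuclideanLin P y⟫) t :=
      (hxt t ht).inner ℝ hLP
    have h2 : HasDerivAt (fun s => ‖ft s‖ ^ 2) (⟪f, f'⟫ + ⟪f', f⟫) t := by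
      have := ((hft t ht).inner ℝ (hft t ht))
      simpa only [real_inner_self_eq_norm_sq] using this
    have hV := h1.add (h2.const_mul Γ)
    convert hV using 1
    case e'_4 => rfl
    case e'_5 => rfl
    case e'_8 => rfl
    have e1 : ⟪Matrix.toEuclideanLin A y, Matrix.toEuclideanLin P y⟫ =
        ⟪y, Matrix.toEuclideanLin Aᵀ (Matrix.toEuclideanLin P y)⟫ := key A y _
    have e2 : ⟪y, Matrix.toEuclideanLin P B⟫ = ⟪B, Matrix.toEuclideanLin P y⟫ := by
      have h := key P y B
      rw [hPsym] at h
      rw [← h, real_inner_comm]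
    have e3 : ⟪y, Matrix.toEuclideanLin P (Matrix.toEuclideanLin A y)⟫ +
        ⟪y, Matrix.toEuclideanLin Aᵀ (Matrix.toEuclideanLin P y)⟫ =
        -⟪y, Matrix.toEuclideanLin Q y⟫ := by
      rw [← LMN P A, ← LMN Aᵀ P, ← inner_add_right]
      have : Matrix.toEuclideanLin (P * A) y + Matrix.toEuclideanLin (Aᵀ * P) y =
          Matrix.toEuclideanLin (Aᵀ * P + P * A) y := by
        simp [Matrix.toEuclideanLin_apply, Matrix.add_mulVec]; abel
      rw [this, hLyap]
      simp [Matrix.toEuclideanLin_apply, Matrix.neg_mulVec, inner_neg_right]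
    rw [hy', hf']
    simp only [inner_add_right, inner_add_left, real_inner_smul_left, real_inner_smul_right]
    rw [e1, e2, real_inner_comm f (k (x t))]
    have hΓ' : Γ * Γ⁻¹ = 1 := mul_inv_cancel₀ hΓ.ne'
    linear_combination -e3 +
      (2 * ⟪f, k (x t)⟫ * ⟪B, Matrix.toEuclideanLin P y⟫) * hΓ'
  refine ⟨main, ?_⟩
  have hQnn : ∀ v : EuclideanSpace ℝ (Fin d), 0 ≤ ⟪v, Matrix.toEuclideanLin Q v⟫ := by
    intro v
    have := hQ.posSemidef.dotProduct_mulVec_nonneg ((WithLp.equiv 2 _) v)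
    simpa [PiLp.inner_apply, Matrix.toEuclideanLin_apply, dotProduct,
      RCLike.inner_apply, starRingEnd_apply, mul_comm] using this
  apply antitoneOn_of_deriv_nonpos (convex_Ici 0)
  · exact fun t ht => (main t ht).continuousAt.continuousWithinAt
  · rw [interior_Ici]
    exact fun t ht => (main t (le_of_lt ht)).differentiableAt.differentiableWithinAt
  · rw [interior_Ici]
    intro t ht
    rw [(main t (le_of_lt ht)).deriv]
    simpa using hQnn (xt t)
end

section
/- Suppose the kernel is uniformly bounded on the diagonal, i.e. ⟪k(y), k(y)⟫_H ≤ k̄² for all y ∈ ℝ^d, and let (x̃, f̃) be a solution of the error system. Then the state error converges to zero: ‖x̃(t)‖_{ℝ^d} → 0 as t → ∞. -/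
open scoped RealInnerProductSpace Matrix
open Filter MeasureTheory

section StateErrorHelpers
variable {d : ℕ}

private lemma inner_toEuclideanLin_left' (M : Matrix (Fin d) (Fin d) ℝ)
    (u v : EuclideanSpace ℝ (Fin d)) :
    ⟪Matrix.toEuclideanLin M u, v⟫ = ⟪u, Matrix.toEuclideanLin Mᵀ v⟫ := by
  have h : Mᵀ = Mᴴ := (Matrix.conjTranspose_eq_transpose_of_trivial M).symm
  rw [h, Matrix.toEuclideanLin_conjTranspose_eq_adjoint, LinearMap.adjoint_inner_right]

private lemma toEuclideanLin_comp_apply' (M N : Matrix (Fin d) (Fin d) ℝ)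
    (v : EuclideanSpace ℝ (Fin d)) :
    Matrix.toEuclideanLin (M * N) v = Matrix.toEuclideanLin M (Matrix.toEuclideanLin N v) := by
  simp [Matrix.toEuclideanLin_apply, Matrix.mulVec_mulVec]

private lemma inner_toEuclideanLin_pos' {M : Matrix (Fin d) (Fin d) ℝ} (hM : M.PosDef)
    {v : EuclideanSpace ℝ (Fin d)} (hv : v ≠ 0) :
    0 < ⟪v, Matrix.toEuclideanLin M v⟫ := by
  have := hM.dotProduct_mulVec_pos (x := WithLp.equiv 2 _ v) (by simpa using hv)
  simpa [EuclideanSpace.inner_eq_star_dotProduct, Matrix.toEuclideanLin_apply,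
    dotProduct_comm (M *ᵥ _)] using this

private lemma posdef_lower' {M : Matrix (Fin d) (Fin d) ℝ} (hM : M.PosDef) :
    ∃ c > 0, ∀ v : EuclideanSpace ℝ (Fin d), c * ‖v‖ ^ 2 ≤ ⟪v, Matrix.toEuclideanLin M v⟫ := by
  by_cases hd : Nonempty (Fin d)
  · obtain ⟨i⟩ := hd
    have hS : IsCompact (Metric.sphere (0 : EuclideanSpace ℝ (Fin d)) 1) :=
      isCompact_sphere 0 1
    have hne : (Metric.sphere (0 : EuclideanSpace ℝ (Fin d)) 1).Nonempty :=
      ⟨EuclideanSpace.single i 1, by simp [EuclideanSpace.norm_single]⟩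
    have hcont : Continuous fun v : EuclideanSpace ℝ (Fin d) =>
        ⟪v, Matrix.toEuclideanLin M v⟫ := by
      have hMc : Continuous fun v : EuclideanSpace ℝ (Fin d) => Matrix.toEuclideanLin M v :=
        LinearMap.continuous_of_finiteDimensional _
      exact continuous_id.inner hMc
    obtain ⟨u, hu, hmin0⟩ := hS.exists_isMinOn hne hcont.continuousOn
    have hmin : ∀ w ∈ Metric.sphere (0 : EuclideanSpace ℝ (Fin d)) 1,
        ⟪u, Matrix.toEuclideanLin M u⟫ ≤ ⟪w, Matrix.toEuclideanLin M w⟫ := fun w hw => hmin0 hw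
    have hu0 : u ≠ 0 := by
      intro h; rw [h] at hu; simp at hu
    refine ⟨⟪u, Matrix.toEuclideanLin M u⟫, inner_toEuclideanLin_pos' hM hu0, fun v => ?_⟩
    by_cases hv : v = 0
    · simp [hv]
    · have hnv : (0:ℝ) < ‖v‖ := norm_pos_iff.mpr hv
      have husphere : (‖v‖⁻¹ • v) ∈ Metric.sphere (0 : EuclideanSpace ℝ (Fin d)) 1 := by
        simp [norm_smul, abs_of_pos, hnv, inv_mul_cancel₀ hnv.ne']
      have := hmin _ husphere
      have hexp : ⟪‖v‖⁻¹ • v, Matrix.toEuclideanLin M (‖v‖⁻¹ • v)⟫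
          = (‖v‖⁻¹ * ‖v‖⁻¹) * ⟪v, Matrix.toEuclideanLin M v⟫ := by
        rw [LinearMap.map_smul, real_inner_smul_left, real_inner_smul_right]; ring
      rw [hexp] at this
      have h2 : ⟪u, Matrix.toEuclideanLin M u⟫ * ‖v‖ ^ 2
          ≤ ((‖v‖⁻¹ * ‖v‖⁻¹) * ⟪v, Matrix.toEuclideanLin M v⟫) * ‖v‖ ^ 2 :=
        mul_le_mul_of_nonneg_right this (by positivity)
      calc ⟪u, Matrix.toEuclideanLin M u⟫ * ‖v‖ ^ 2
          ≤ ((‖v‖⁻¹ * ‖v‖⁻¹) * ⟪v, Matrix.toEuclideanLin M v⟫) * ‖v‖ ^ 2 := h2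
        _ = ⟪v, Matrix.toEuclideanLin M v⟫ := by
            have h1 : ‖v‖⁻¹ * ‖v‖⁻¹ * ‖v‖ ^ 2 = 1 := by
              field_simp [pow_two]
            calc ‖v‖⁻¹ * ‖v‖⁻¹ * ⟪v, Matrix.toEuclideanLin M v⟫ * ‖v‖ ^ 2
                = (‖v‖⁻¹ * ‖v‖⁻¹ * ‖v‖ ^ 2) * ⟪v, Matrix.toEuclideanLin M v⟫ := by ring
              _ = ⟪v, Matrix.toEuclideanLin M v⟫ := by rw [h1, one_mul]
  · refine ⟨1, one_pos, fun v => ?_⟩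
    have : v = 0 := by
      ext i; exact absurd ⟨i⟩ hd
    simp [this]

end StateErrorHelpers

set_option maxHeartbeats 1000000 in
/-- If the kernel is uniformly bounded on the diagonal, the state error of the error
system converges to zero: `‖x̃(t)‖ → 0` as `t → ∞`. -/
theorem state_error_tendsto_zero {H : Type*} [NormedAddCommGroup H]
    [InnerProductSpace ℝ H] [CompleteSpace H] {d : ℕ}
    (k : EuclideanSpace ℝ (Fin d) → H) (hk : Continuous k)
    (kbar : ℝ) (hkbar : ∀ y, ⟪k y, k y⟫ ≤ kbar ^ 2)
    (A : Matrix (Fin d) (Fin d) ℝ) (B : EuclideanSpace ℝ (Fin d))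
    (Γ : ℝ) (hΓ : 0 < Γ)
    (P Q : Matrix (Fin d) (Fin d) ℝ) (hP : P.PosDef) (hQ : Q.PosDef)
    (hLyap : Aᵀ * P + P * A = -Q)
    (x : ℝ → EuclideanSpace ℝ (Fin d)) (hx : Continuous x)
    (xt : ℝ → EuclideanSpace ℝ (Fin d)) (ft : ℝ → H)
    (hxt : ∀ t : ℝ, 0 ≤ t →
      HasDerivAt xt (Matrix.toEuclideanLin A (xt t) + ⟪k (x t), ft t⟫ • B) t)
    (hft : ∀ t : ℝ, 0 ≤ t →
      HasDerivAt ft (-(Γ⁻¹ * ⟪B, Matrix.toEuclideanLin P (xt t)⟫) • k (x t)) t) :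
    Tendsto (fun t => ‖xt t‖) atTop (nhds 0) := by
  -- the derivative of the Lyapunov function V
  have hVderiv : ∀ t : ℝ, 0 ≤ t →
      HasDerivAt (fun s => ⟪xt s, Matrix.toEuclideanLin P (xt s)⟫ + Γ * ⟪ft s, ft s⟫)
        (-(⟪xt t, Matrix.toEuclideanLin Q (xt t)⟫)) t := by
    intro t ht
    set Pl := Matrix.toEuclideanLin P with hPldef
    set w : EuclideanSpace ℝ (Fin d) := Matrix.toEuclideanLin A (xt t) + ⟪k (x t), ft t⟫ • B
      with hwdef
    set f' : H := -(Γ⁻¹ * ⟪B, Pl (xt t)⟫) • k (x t) with hf'def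
    have hx' : HasDerivAt xt w t := hxt t ht
    have hf' : HasDerivAt ft f' t := hft t ht
    have hPx : HasDerivAt (fun s => Pl (xt s)) (Pl w) t := by
      exact (LinearMap.toContinuousLinearMap Pl).hasFDerivAt.comp_hasDerivAt t hx'
    have h1 : HasDerivAt (fun s => ⟪xt s, Pl (xt s)⟫) (⟪xt t, Pl w⟫ + ⟪w, Pl (xt t)⟫) t :=
      hx'.inner ℝ hPx
    have h2 : HasDerivAt (fun s => Γ * ⟪ft s, ft s⟫) (Γ * (⟪ft t, f'⟫ + ⟪f', ft t⟫)) t :=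
      (hf'.inner ℝ hf').const_mul Γ
    have key : ⟪xt t, Pl w⟫ + ⟪w, Pl (xt t)⟫ + Γ * (⟪ft t, f'⟫ + ⟪f', ft t⟫)
        = -(⟪xt t, Matrix.toEuclideanLin Q (xt t)⟫) := by
      have hPsymm : Pᵀ = P := by
        rw [← Matrix.conjTranspose_eq_transpose_of_trivial]; exact hP.isHermitian
      set a : ℝ := ⟪B, Pl (xt t)⟫ with hadef
      set cc : ℝ := ⟪k (x t), ft t⟫ with hccdef
      have hBP : ⟪xt t, Pl B⟫ = a := by
        rw [hadef, real_inner_comm, hPldef, inner_toEuclideanLin_left', hPsymm]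
      have e1 : ⟪xt t, Pl w⟫ = ⟪xt t, Pl (Matrix.toEuclideanLin A (xt t))⟫ + cc * a := by
        rw [hwdef, map_add, LinearMap.map_smul, inner_add_right, real_inner_smul_right, hBP]
      have e2 : ⟪w, Pl (xt t)⟫
          = ⟪xt t, Matrix.toEuclideanLin Aᵀ (Pl (xt t))⟫ + cc * a := by
        rw [hwdef, inner_add_left, real_inner_smul_left, hPldef, inner_toEuclideanLin_left']
      have e3 : ⟪xt t, Matrix.toEuclideanLin Aᵀ (Pl (xt t))⟫
          + ⟪xt t, Pl (Matrix.toEuclideanLin A (xt t))⟫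
          = -(⟪xt t, Matrix.toEuclideanLin Q (xt t)⟫) := by
        rw [hPldef, ← toEuclideanLin_comp_apply', ← toEuclideanLin_comp_apply',
          ← inner_add_right, ← LinearMap.add_apply, ← map_add, hLyap, map_neg,
          LinearMap.neg_apply, inner_neg_right]
      have e4 : ⟪ft t, f'⟫ = -(Γ⁻¹ * a) * cc := by
        rw [hf'def, real_inner_smul_right, real_inner_comm]
      have e5 : ⟪f', ft t⟫ = -(Γ⁻¹ * a) * cc := by
        rw [hf'def, real_inner_smul_left]
      rw [e1, e2, e4, e5]
      have hΓ1 : Γ * Γ⁻¹ = 1 := mul_inv_cancel₀ hΓ.ne'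
      calc ⟪xt t, Pl (Matrix.toEuclideanLin A (xt t))⟫ + cc * a
            + (⟪xt t, Matrix.toEuclideanLin Aᵀ (Pl (xt t))⟫ + cc * a)
            + Γ * (-(Γ⁻¹ * a) * cc + -(Γ⁻¹ * a) * cc)
          = ⟪xt t, Matrix.toEuclideanLin Aᵀ (Pl (xt t))⟫
            + ⟪xt t, Pl (Matrix.toEuclideanLin A (xt t))⟫
            + 2 * cc * a - (Γ * Γ⁻¹) * (2 * a * cc) := by ring
        _ = -(⟪xt t, Matrix.toEuclideanLin Q (xt t)⟫) := by rw [e3, hΓ1]; ring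
    exact key ▸ (h1.add h2)
  -- abbreviations
  set Ql := Matrix.toEuclideanLin Q with hQldef
  set Pl := Matrix.toEuclideanLin P with hPldef
  set wf : ℝ → EuclideanSpace ℝ (Fin d) :=
    fun t => Matrix.toEuclideanLin A (xt t) + ⟪k (x t), ft t⟫ • B with hwfdef
  set V : ℝ → ℝ := fun s => ⟪xt s, Pl (xt s)⟫ + Γ * ⟪ft s, ft s⟫ with hVdef
  set g : ℝ → ℝ := fun t => ⟪xt t, Ql (xt t)⟫ with hgdef
  set gd : ℝ → ℝ := fun t => ⟪xt t, Ql (wf t)⟫ + ⟪wf t, Ql (xt t)⟫ with hgddef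
  -- derivative of g
  have hgderiv : ∀ t : ℝ, 0 ≤ t → HasDerivAt g (gd t) t := by
    intro t ht
    have hx' : HasDerivAt xt (wf t) t := hxt t ht
    have hQx : HasDerivAt (fun s => Ql (xt s)) (Ql (wf t)) t := by
      exact (LinearMap.toContinuousLinearMap Ql).hasFDerivAt.comp_hasDerivAt t hx'
    exact hx'.inner ℝ hQx
  -- positivity constants
  obtain ⟨cP, hcP, hcPle⟩ := posdef_lower' hP
  obtain ⟨cQ, hcQ, hcQle⟩ := posdef_lower' hQ
  have hPnn : ∀ v : EuclideanSpace ℝ (Fin d), 0 ≤ ⟪v, Pl v⟫ := fun v =>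
    le_trans (by positivity) (hcPle v)
  have hgnn : ∀ t, 0 ≤ g t := fun t => le_trans (by positivity) (hcQle (xt t))
  have hVnn : ∀ t, 0 ≤ V t := fun t =>
    add_nonneg (hPnn _) (mul_nonneg hΓ.le real_inner_self_nonneg)
  -- V is antitone on [0, ∞)
  have hVcont : ContinuousOn V (Set.Ici (0:ℝ)) := fun t ht =>
    ((hVderiv t ht).continuousAt).continuousWithinAt
  have hVanti : AntitoneOn V (Set.Ici (0:ℝ)) := by
    apply antitoneOn_of_deriv_nonpos (convex_Ici 0) hVcont
    · intro t ht
      rw [interior_Ici] at ht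
      exact ((hVderiv t ht.le).differentiableAt).differentiableWithinAt
    · intro t ht
      rw [interior_Ici] at ht
      rw [(hVderiv t ht.le).deriv]
      exact neg_nonpos.mpr (hgnn t)
  have hVle : ∀ t : ℝ, 0 ≤ t → V t ≤ V 0 := fun t ht =>
    hVanti Set.self_mem_Ici ht ht
  -- uniform bounds
  have hxtb : ∀ t : ℝ, 0 ≤ t → ‖xt t‖ ≤ Real.sqrt (V 0 / cP) := by
    intro t ht
    have h1 : cP * ‖xt t‖ ^ 2 ≤ V 0 := by
      have := hcPle (xt t)
      have h2 : ⟪xt t, Pl (xt t)⟫ ≤ V t := le_add_of_nonneg_right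
        (mul_nonneg hΓ.le real_inner_self_nonneg)
      linarith [hVle t ht]
    have h3 : ‖xt t‖ ^ 2 ≤ V 0 / cP := (le_div_iff₀ hcP).mpr (by linarith)
    calc ‖xt t‖ = Real.sqrt (‖xt t‖ ^ 2) := (Real.sqrt_sq (norm_nonneg _)).symm
      _ ≤ Real.sqrt (V 0 / cP) := Real.sqrt_le_sqrt h3
  have hftb : ∀ t : ℝ, 0 ≤ t → ‖ft t‖ ≤ Real.sqrt (V 0 / Γ) := by
    intro t ht
    have h1 : Γ * ‖ft t‖ ^ 2 ≤ V 0 := by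
      have h2 : Γ * ⟪ft t, ft t⟫ ≤ V t := le_add_of_nonneg_left (hPnn _)
      rw [real_inner_self_eq_norm_sq] at h2
      linarith [hVle t ht]
    have h3 : ‖ft t‖ ^ 2 ≤ V 0 / Γ := (le_div_iff₀ hΓ).mpr (by linarith)
    calc ‖ft t‖ = Real.sqrt (‖ft t‖ ^ 2) := (Real.sqrt_sq (norm_nonneg _)).symm
      _ ≤ Real.sqrt (V 0 / Γ) := Real.sqrt_le_sqrt h3
  have hkb : ∀ y, ‖k y‖ ≤ |kbar| := by
    intro y
    have h1 : ‖k y‖ ^ 2 ≤ kbar ^ 2 := by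
      rw [← real_inner_self_eq_norm_sq]; exact hkbar y
    calc ‖k y‖ = Real.sqrt (‖k y‖ ^ 2) := (Real.sqrt_sq (norm_nonneg _)).symm
      _ ≤ Real.sqrt (kbar ^ 2) := Real.sqrt_le_sqrt h1
      _ = |kbar| := Real.sqrt_sq_eq_abs kbar
  set Mx : ℝ := Real.sqrt (V 0 / cP) with hMxdef
  set Mf : ℝ := Real.sqrt (V 0 / Γ) with hMfdef
  have hMx0 : 0 ≤ Mx := Real.sqrt_nonneg _
  have hMf0 : 0 ≤ Mf := Real.sqrt_nonneg _
  set AC := LinearMap.toContinuousLinearMap (Matrix.toEuclideanLin A) with hACdef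
  set QC := LinearMap.toContinuousLinearMap Ql with hQCdef
  set Mw : ℝ := ‖AC‖ * Mx + |kbar| * Mf * ‖B‖ with hMwdef
  have hMw0 : 0 ≤ Mw := by positivity
  have hwb : ∀ t : ℝ, 0 ≤ t → ‖wf t‖ ≤ Mw := by
    intro t ht
    have h1 : ‖Matrix.toEuclideanLin A (xt t)‖ ≤ ‖AC‖ * Mx := by
      calc ‖Matrix.toEuclideanLin A (xt t)‖ = ‖AC (xt t)‖ := by simp [hACdef]
        _ ≤ ‖AC‖ * ‖xt t‖ := AC.le_opNorm _
        _ ≤ ‖AC‖ * Mx := by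
            exact mul_le_mul_of_nonneg_left (hxtb t ht) (norm_nonneg _)
    have h2 : ‖⟪k (x t), ft t⟫ • B‖ ≤ |kbar| * Mf * ‖B‖ := by
      rw [norm_smul]
      have h3 : |⟪k (x t), ft t⟫| ≤ |kbar| * Mf := by
        calc |⟪k (x t), ft t⟫| ≤ ‖k (x t)‖ * ‖ft t‖ := abs_real_inner_le_norm _ _
          _ ≤ |kbar| * Mf := mul_le_mul (hkb _) (hftb t ht) (norm_nonneg _) (abs_nonneg _)
      calc ‖⟪k (x t), ft t⟫‖ * ‖B‖ = |⟪k (x t), ft t⟫| * ‖B‖ := by rw [Real.norm_eq_abs]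
        _ ≤ (|kbar| * Mf) * ‖B‖ := mul_le_mul_of_nonneg_right h3 (norm_nonneg _)
    calc ‖wf t‖ ≤ ‖Matrix.toEuclideanLin A (xt t)‖ + ‖⟪k (x t), ft t⟫ • B‖ := norm_add_le _ _
      _ ≤ Mw := by rw [hMwdef]; linarith
  set L : ℝ := 2 * ‖QC‖ * Mx * Mw with hLdef
  have hL0 : 0 ≤ L := by positivity
  have hgdb : ∀ t : ℝ, 0 ≤ t → ‖gd t‖ ≤ L := by
    intro t ht
    have hb : ∀ u v : EuclideanSpace ℝ (Fin d), |⟪u, Ql v⟫| ≤ ‖QC‖ * ‖v‖ * ‖u‖ := by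
      intro u v
      calc |⟪u, Ql v⟫| ≤ ‖u‖ * ‖Ql v‖ := abs_real_inner_le_norm _ _
        _ = ‖u‖ * ‖QC v‖ := by simp [hQCdef]
        _ ≤ ‖u‖ * (‖QC‖ * ‖v‖) := mul_le_mul_of_nonneg_left (QC.le_opNorm v) (norm_nonneg _)
        _ = ‖QC‖ * ‖v‖ * ‖u‖ := by ring
    have h1 : |⟪xt t, Ql (wf t)⟫| ≤ ‖QC‖ * Mw * Mx := by
      calc |⟪xt t, Ql (wf t)⟫| ≤ ‖QC‖ * ‖wf t‖ * ‖xt t‖ := hb _ _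
        _ ≤ ‖QC‖ * Mw * Mx := by
            apply mul_le_mul (mul_le_mul_of_nonneg_left (hwb t ht) (norm_nonneg _))
              (hxtb t ht) (norm_nonneg _) (by positivity)
    have h2 : |⟪wf t, Ql (xt t)⟫| ≤ ‖QC‖ * Mx * Mw := by
      calc |⟪wf t, Ql (xt t)⟫| ≤ ‖QC‖ * ‖xt t‖ * ‖wf t‖ := hb _ _
        _ ≤ ‖QC‖ * Mx * Mw := by
            apply mul_le_mul (mul_le_mul_of_nonneg_left (hxtb t ht) (norm_nonneg _))
              (hwb t ht) (norm_nonneg _) (by positivity)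
    calc ‖gd t‖ ≤ |⟪xt t, Ql (wf t)⟫| + |⟪wf t, Ql (xt t)⟫| := by
          rw [Real.norm_eq_abs]; exact abs_add_le _ _
      _ ≤ L := by rw [hLdef]; linarith
  -- g is Lipschitz on [0, ∞)
  have hglip : ∀ s ∈ Set.Ici (0:ℝ), ∀ t ∈ Set.Ici (0:ℝ), ‖g t - g s‖ ≤ L * ‖t - s‖ := by
    intro s hs t ht
    exact (convex_Ici 0).norm_image_sub_le_of_norm_hasDerivWithin_le
      (fun u hu => (hgderiv u hu).hasDerivWithinAt) (fun u hu => hgdb u hu) hs ht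
  have hgcont : ContinuousOn g (Set.Ici (0:ℝ)) := fun t ht =>
    ((hgderiv t ht).continuousAt).continuousWithinAt
  -- fundamental theorem of calculus: ∫ g over [s,t] = V s - V t
  have hFTC : ∀ s t : ℝ, 0 ≤ s → s ≤ t → ∫ u in s..t, g u = V s - V t := by
    intro s t hs hst
    have huIcc : Set.uIcc s t = Set.Icc s t := Set.uIcc_of_le hst
    have hsub : Set.uIcc s t ⊆ Set.Ici (0:ℝ) := by
      rw [huIcc]; exact fun u hu => le_trans hs hu.1
    have hint : IntervalIntegrable (fun u => -(g u)) volume s t :=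
      ((hgcont.mono hsub).neg).intervalIntegrable
    have h1 : ∫ u in s..t, -(g u) = V t - V s :=
      intervalIntegral.integral_eq_sub_of_hasDerivAt
        (fun u hu => hVderiv u (hsub hu)) hint
    have h2 : ∫ u in s..t, -(g u) = -∫ u in s..t, g u := intervalIntegral.integral_neg
    linarith [h1.symm.trans h2]
  -- convergence of V
  have hanti2 : Antitone (fun t : ℝ => V (max t 0)) := fun s t hst =>
    hVanti (le_max_right s 0) (le_max_right t 0) (max_le_max hst le_rfl)
  have hbdd : BddBelow (Set.range fun t : ℝ => V (max t 0)) := by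
    refine ⟨0, ?_⟩
    rintro _ ⟨t, rfl⟩
    exact hVnn _
  have hVlim : Tendsto (fun t : ℝ => V (max t 0)) atTop
      (nhds (⨅ t : ℝ, V (max t 0))) := tendsto_atTop_ciInf hanti2 hbdd
  set Vinf : ℝ := ⨅ t : ℝ, V (max t 0) with hVinfdef
  have hVtend : Tendsto V atTop (nhds Vinf) := by
    refine Tendsto.congr' ?_ hVlim
    filter_upwards [eventually_ge_atTop (0:ℝ)] with t ht
    rw [max_eq_left ht]
  -- g tends to 0 (Barbalat)
  have hgto0 : Tendsto g atTop (nhds 0) := by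
    rw [Metric.tendsto_atTop]
    intro ε hε
    set L' : ℝ := L + 1 with hL'def
    have hL' : 0 < L' := by linarith
    set δ : ℝ := ε / (2 * L') with hδdef
    have hδ : 0 < δ := by positivity
    have hVshift : Tendsto (fun t => V (t + δ)) atTop (nhds Vinf) :=
      hVtend.comp (tendsto_atTop_add_const_right atTop δ tendsto_id)
    have hdiff0 : Tendsto (fun t => V t - V (t + δ)) atTop (nhds 0) := by
      simpa using hVtend.sub hVshift
    have hev : ∀ᶠ t in atTop, V t - V (t + δ) < δ * (ε / 2) := by
      have := hdiff0.eventually (eventually_lt_nhds (by positivity : (0:ℝ) < δ * (ε / 2)))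
      simpa using this
    rw [eventually_atTop] at hev
    obtain ⟨N0, hN0⟩ := hev
    refine ⟨max N0 0, fun t ht => ?_⟩
    have ht0 : 0 ≤ t := le_trans (le_max_right N0 0) ht
    have htN0 : N0 ≤ t := le_trans (le_max_left N0 0) ht
    -- lower bound on the integral
    have hsub : Set.uIcc t (t + δ) ⊆ Set.Ici (0:ℝ) := by
      rw [Set.uIcc_of_le (by linarith)]
      exact fun u hu => le_trans ht0 hu.1
    have hint : IntervalIntegrable g volume t (t + δ) :=
      (hgcont.mono hsub).intervalIntegrable
    have hlow : ∀ u ∈ Set.Icc t (t + δ), g t - L * δ ≤ g u := by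
      intro u hu
      have hu0 : u ∈ Set.Ici (0:ℝ) := le_trans ht0 hu.1
      have := hglip t ht0 u hu0
      rw [Real.norm_eq_abs, Real.norm_eq_abs] at this
      have habs : |g u - g t| ≤ L * δ := by
        refine le_trans this ?_
        have : |u - t| ≤ δ := by
          rw [abs_of_nonneg (by linarith [hu.1])]
          linarith [hu.2]
        exact mul_le_mul_of_nonneg_left this hL0
      have := abs_le.mp habs
      linarith [this.1]
    have hmono : ∫ u in t..(t + δ), (g t - L * δ) ≤ ∫ u in t..(t + δ), g u :=
      intervalIntegral.integral_mono_on (by linarith) intervalIntegrable_const hint hlow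
    have hconst : ∫ u in t..(t + δ), (g t - L * δ) = δ * (g t - L * δ) := by
      rw [intervalIntegral.integral_const]
      simp [smul_eq_mul]
    have hFTCt : ∫ u in t..(t + δ), g u = V t - V (t + δ) := hFTC t (t + δ) ht0 (by linarith)
    have hkey : δ * (g t - L * δ) < δ * (ε / 2) := by
      rw [← hconst]
      calc ∫ u in t..(t + δ), (g t - L * δ) ≤ ∫ u in t..(t + δ), g u := hmono
        _ = V t - V (t + δ) := hFTCt
        _ < δ * (ε / 2) := hN0 t htN0
    have h1 : g t - L * δ < ε / 2 := by
      have := (mul_lt_mul_iff_right₀ hδ).mp hkey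
      linarith
    have h2 : L * δ ≤ ε / 2 := by
      have hLL' : L ≤ L' := by rw [hL'def]; linarith
      have : L * δ ≤ L' * δ := mul_le_mul_of_nonneg_right hLL' hδ.le
      rw [hδdef] at this
      calc L * δ ≤ L' * (ε / (2 * L')) := this
        _ = ε / 2 := by field_simp
    have hgt : g t < ε := by linarith
    rw [Real.dist_eq, sub_zero, abs_of_nonneg (hgnn t)]
    exact hgt
  -- conclude
  have hbound : ∀ t : ℝ, 0 ≤ t → ‖xt t‖ ≤ Real.sqrt (g t / cQ) := by
    intro t ht
    have h1 : cQ * ‖xt t‖ ^ 2 ≤ g t := hcQle (xt t)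
    have h2 : ‖xt t‖ ^ 2 ≤ g t / cQ := (le_div_iff₀ hcQ).mpr (by linarith)
    calc ‖xt t‖ = Real.sqrt (‖xt t‖ ^ 2) := (Real.sqrt_sq (norm_nonneg _)).symm
      _ ≤ Real.sqrt (g t / cQ) := Real.sqrt_le_sqrt h2
  have hsqrt0 : Tendsto (fun t => Real.sqrt (g t / cQ)) atTop (nhds 0) := by
    have hdiv : Tendsto (fun t => g t / cQ) atTop (nhds 0) := by
      simpa using hgto0.div_const cQ
    have := (Real.continuous_sqrt.tendsto 0).comp hdiv
    simpa [Function.comp_def] using this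
  refine tendsto_of_tendsto_of_tendsto_of_le_of_le' tendsto_const_nhds hsqrt0 ?_ ?_
  · exact Eventually.of_forall fun t => norm_nonneg _
  · filter_upwards [eventually_ge_atTop (0:ℝ)] with t ht
    exact hbound t ht
end

section
/- Let (x̃, f̃) be a solution of the error system. Then for all t ≥ 0, Γ ‖f̃(t)‖²_H ≤ x̃(0)ᵀ P x̃(0) + Γ ‖f̃(0)‖²_H and x̃(t)ᵀ P x̃(t) ≤ x̃(0)ᵀ P x̃(0) + Γ ‖f̃(0)‖²_H; in particular both the state error and the function error remain uniformly bounded in time. -/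
open scoped RealInnerProductSpace Matrix
open Filter MeasureTheory

private lemma inner_toEuclideanLin_eq' {d : ℕ} (M : Matrix (Fin d) (Fin d) ℝ)
    (v w : EuclideanSpace ℝ (Fin d)) :
    ⟪v, Matrix.toEuclideanLin M w⟫ =
      dotProduct (WithLp.equiv 2 _ v) (M *ᵥ (WithLp.equiv 2 _ w)) := by
  rw [EuclideanSpace.inner_eq_star_dotProduct, Matrix.ofLp_toEuclideanLin_apply]
  simp [dotProduct_comm]

private lemma dot_nonneg_of_posSemidef' {d : ℕ} {P : Matrix (Fin d) (Fin d) ℝ}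
    (hP : P.PosSemidef) (v : Fin d → ℝ) :
    0 ≤ dotProduct v (P *ᵥ v) := by
  have := hP.re_dotProduct_nonneg v
  simpa using this

private lemma toEuclideanLin_mul' {d : ℕ} (M N : Matrix (Fin d) (Fin d) ℝ)
    (v : EuclideanSpace ℝ (Fin d)) :
    Matrix.toEuclideanLin (M * N) v = Matrix.toEuclideanLin M (Matrix.toEuclideanLin N v) := by
  apply (WithLp.equiv 2 (Fin d → ℝ)).symm.injective.eq_iff.mpr
  simp [Matrix.mulVec_mulVec]

/-- Monotonicity of the Lyapunov function implies that both the function error and the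
state error of the error system remain uniformly bounded in time. -/
theorem error_system_uniform_bound {H : Type*} [NormedAddCommGroup H]
    [InnerProductSpace ℝ H] [CompleteSpace H] {d : ℕ}
    (k : EuclideanSpace ℝ (Fin d) → H) (hk : Continuous k)
    (A : Matrix (Fin d) (Fin d) ℝ) (B : EuclideanSpace ℝ (Fin d))
    (Γ : ℝ) (hΓ : 0 < Γ)
    (P Q : Matrix (Fin d) (Fin d) ℝ) (hP : P.PosDef) (hQ : Q.PosDef)
    (hLyap : Aᵀ * P + P * A = -Q)
    (x : ℝ → EuclideanSpace ℝ (Fin d)) (hx : Continuous x)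
    (xt : ℝ → EuclideanSpace ℝ (Fin d)) (ft : ℝ → H)
    (hxt : ∀ t : ℝ, 0 ≤ t →
      HasDerivAt xt (Matrix.toEuclideanLin A (xt t) + ⟪k (x t), ft t⟫ • B) t)
    (hft : ∀ t : ℝ, 0 ≤ t →
      HasDerivAt ft (-(Γ⁻¹ * ⟪B, Matrix.toEuclideanLin P (xt t)⟫) • k (x t)) t) :
    ∀ t : ℝ, 0 ≤ t →
      Γ * ‖ft t‖ ^ 2 ≤ ⟪xt 0, Matrix.toEuclideanLin P (xt 0)⟫ + Γ * ‖ft 0‖ ^ 2 ∧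
      ⟪xt t, Matrix.toEuclideanLin P (xt t)⟫ ≤
        ⟪xt 0, Matrix.toEuclideanLin P (xt 0)⟫ + Γ * ‖ft 0‖ ^ 2 := by
  classical
  set L : EuclideanSpace ℝ (Fin d) →L[ℝ] EuclideanSpace ℝ (Fin d) :=
    LinearMap.toContinuousLinearMap (Matrix.toEuclideanLin P) with hL
  have hLapp : ∀ v, L v = Matrix.toEuclideanLin P v := fun v => rfl
  set V : ℝ → ℝ := fun s => ⟪xt s, Matrix.toEuclideanLin P (xt s)⟫ + Γ * ‖ft s‖ ^ 2 with hVdef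
  -- P is symmetric as an operator
  have hPsym : (Matrix.toEuclideanLin P).IsSymmetric :=
    Matrix.isHermitian_iff_isSymmetric.mp hP.1
  -- the Lyapunov bilinear identity
  have hbil : ∀ v : EuclideanSpace ℝ (Fin d),
      ⟪v, Matrix.toEuclideanLin P (Matrix.toEuclideanLin A v)⟫
        + ⟪Matrix.toEuclideanLin A v, Matrix.toEuclideanLin P v⟫
      = -⟪v, Matrix.toEuclideanLin Q v⟫ := by
    intro v
    have hadj : ⟪Matrix.toEuclideanLin A v, Matrix.toEuclideanLin P v⟫
        = ⟪v, Matrix.toEuclideanLin Aᵀ (Matrix.toEuclideanLin P v)⟫ := by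
      have h1 : Matrix.toEuclideanLin Aᵀ = Matrix.toEuclideanLin Aᴴ := by
        rw [Matrix.conjTranspose_eq_transpose_of_trivial]
      rw [h1, Matrix.toEuclideanLin_conjTranspose_eq_adjoint]
      rw [LinearMap.adjoint_inner_right]
    rw [hadj, ← toEuclideanLin_mul', ← toEuclideanLin_mul', ← inner_add_right,
      ← LinearMap.add_apply, ← map_add, add_comm (P * A), hLyap]
    simp [inner_neg_right]
  -- derivative of V
  have hV : ∀ s : ℝ, 0 ≤ s →
      HasDerivAt V (-⟪xt s, Matrix.toEuclideanLin Q (xt s)⟫) s := by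
    intro s hs
    have hx' := hxt s hs
    have hf' := hft s hs
    have hP' : HasDerivAt (fun u => Matrix.toEuclideanLin P (xt u))
        (Matrix.toEuclideanLin P (Matrix.toEuclideanLin A (xt s) + ⟪k (x s), ft s⟫ • B)) s := by
      have := L.hasFDerivAt.comp_hasDerivAt s hx'
      exact this
    have h1 := HasDerivAt.inner ℝ hx' hP'
    have h2 : HasDerivAt (fun u => Γ * ‖ft u‖ ^ 2)
        (Γ * (2 * ⟪ft s, -(Γ⁻¹ * ⟪B, Matrix.toEuclideanLin P (xt s)⟫) • k (x s)⟫)) s :=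
      (hf'.norm_sq).const_mul Γ
    have hsum := h1.add h2
    have heq : ⟪xt s, Matrix.toEuclideanLin P (Matrix.toEuclideanLin A (xt s)
          + ⟪k (x s), ft s⟫ • B)⟫
        + ⟪Matrix.toEuclideanLin A (xt s) + ⟪k (x s), ft s⟫ • B,
            Matrix.toEuclideanLin P (xt s)⟫
        + Γ * (2 * ⟪ft s, -(Γ⁻¹ * ⟪B, Matrix.toEuclideanLin P (xt s)⟫) • k (x s)⟫)
        = -⟪xt s, Matrix.toEuclideanLin Q (xt s)⟫ := by
      set c : ℝ := ⟪k (x s), ft s⟫ with hc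
      set b : ℝ := ⟪B, Matrix.toEuclideanLin P (xt s)⟫ with hb
      have e1 : ⟪xt s, Matrix.toEuclideanLin P (Matrix.toEuclideanLin A (xt s) + c • B)⟫
          = ⟪xt s, Matrix.toEuclideanLin P (Matrix.toEuclideanLin A (xt s))⟫ + c * b := by
        rw [map_add, inner_add_right, LinearMap.map_smul, inner_smul_right]
        congr 1
        rw [← hPsym (xt s) B, real_inner_comm]
      have e2 : ⟪Matrix.toEuclideanLin A (xt s) + c • B, Matrix.toEuclideanLin P (xt s)⟫
          = ⟪Matrix.toEuclideanLin A (xt s), Matrix.toEuclideanLin P (xt s)⟫ + c * b := by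
        rw [inner_add_left, inner_smul_left]
        simp [hb]
      have e3 : ⟪ft s, -(Γ⁻¹ * b) • k (x s)⟫ = -(Γ⁻¹ * b) * c := by
        rw [real_inner_smul_right, real_inner_comm]
      rw [e1, e2, e3]
      have e4 := hbil (xt s)
      have hΓne : Γ ≠ 0 := ne_of_gt hΓ
      have e5 : Γ * (2 * (-(Γ⁻¹ * b) * c)) = -(2 * (b * c)) := by
        field_simp
      rw [e5]
      linarith [e4]
    rw [heq] at hsum
    exact hsum
  -- V is antitone on [0, t]
  intro t ht
  have key : V t ≤ V 0 := by
    rcases eq_or_lt_of_le ht with h | h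
    · rw [← h]
    have hanti : AntitoneOn V (Set.Icc 0 t) := by
      apply antitoneOn_of_deriv_nonpos (convex_Icc 0 t)
      · intro s hs
        exact ((hV s hs.1).continuousAt).continuousWithinAt
      · intro s hs
        rw [interior_Icc] at hs
        exact ((hV s hs.1.le).differentiableAt).differentiableWithinAt
      · intro s hs
        rw [interior_Icc] at hs
        rw [(hV s hs.1.le).deriv]
        rw [inner_toEuclideanLin_eq']
        simpa using dot_nonneg_of_posSemidef' hQ.posSemidef _
    exact hanti (Set.left_mem_Icc.2 ht) (Set.right_mem_Icc.2 ht) ht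
  have hPnn : ∀ s : ℝ, 0 ≤ ⟪xt s, Matrix.toEuclideanLin P (xt s)⟫ := by
    intro s
    rw [inner_toEuclideanLin_eq']
    exact dot_nonneg_of_posSemidef' hP.posSemidef _
  have hfnn : ∀ s : ℝ, 0 ≤ Γ * ‖ft s‖ ^ 2 := fun s =>
    mul_nonneg hΓ.le (by positivity)
  constructor
  · have := hPnn t
    simp only [hVdef] at key
    linarith
  · have := hfnn t
    simp only [hVdef] at key
    linarith
end

section
/- Let (x̃, f̃) be a solution of the error system. Then for every T ≥ 0, ∫_0^T x̃(τ)ᵀ Q x̃(τ) dτ ≤ x̃(0)ᵀ P x̃(0) + Γ ‖f̃(0)‖²_H; in particular the nonnegative function t ↦ x̃(t)ᵀ Q x̃(t) is integrable on [0,∞). -/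
open scoped RealInnerProductSpace Matrix
open Filter MeasureTheory

lemma aux_mul_apply {d : ℕ} (X Y : Matrix (Fin d) (Fin d) ℝ) (v : EuclideanSpace ℝ (Fin d)) :
    Matrix.toEuclideanLin X (Matrix.toEuclideanLin Y v) =
      Matrix.toEuclideanLin (X * Y) v := by
  simp [Matrix.toEuclideanLin_apply, Matrix.mulVec_mulVec]

lemma aux_adj {d : ℕ} (M : Matrix (Fin d) (Fin d) ℝ) (u w : EuclideanSpace ℝ (Fin d)) :
    ⟪Matrix.toEuclideanLin M u, w⟫ = ⟪u, Matrix.toEuclideanLin Mᵀ w⟫ := by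
  rw [← Matrix.conjTranspose_eq_transpose_of_trivial,
    Matrix.toEuclideanLin_conjTranspose_eq_adjoint]
  exact (LinearMap.adjoint_inner_right _ _ _).symm

lemma aux_nonneg {d : ℕ} {M : Matrix (Fin d) (Fin d) ℝ} (hM : M.PosSemidef)
    (v : EuclideanSpace ℝ (Fin d)) : 0 ≤ ⟪v, Matrix.toEuclideanLin M v⟫ := by
  have := hM.dotProduct_mulVec_nonneg (WithLp.equiv 2 _ v)
  simpa [EuclideanSpace.inner_eq_star_dotProduct, Matrix.toEuclideanLin_apply, dotProduct_comm] using this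

/-- Integrating the Lyapunov identity: for every `T ≥ 0`,
`∫_0^T x̃(τ)ᵀ Q x̃(τ) dτ ≤ x̃(0)ᵀ P x̃(0) + Γ ‖f̃(0)‖²`; in particular the nonnegative
function `t ↦ x̃(t)ᵀ Q x̃(t)` is integrable on `[0, ∞)`. -/
theorem error_system_integral_bound {H : Type*} [NormedAddCommGroup H]
    [InnerProductSpace ℝ H] [CompleteSpace H] {d : ℕ}
    (k : EuclideanSpace ℝ (Fin d) → H) (hk : Continuous k)
    (A : Matrix (Fin d) (Fin d) ℝ) (B : EuclideanSpace ℝ (Fin d))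
    (Γ : ℝ) (hΓ : 0 < Γ)
    (P Q : Matrix (Fin d) (Fin d) ℝ) (hP : P.PosDef) (hQ : Q.PosDef)
    (hLyap : Aᵀ * P + P * A = -Q)
    (x : ℝ → EuclideanSpace ℝ (Fin d)) (hx : Continuous x)
    (xt : ℝ → EuclideanSpace ℝ (Fin d)) (ft : ℝ → H)
    (hxt : ∀ t : ℝ, 0 ≤ t →
      HasDerivAt xt (Matrix.toEuclideanLin A (xt t) + ⟪k (x t), ft t⟫ • B) t)
    (hft : ∀ t : ℝ, 0 ≤ t →
      HasDerivAt ft (-(Γ⁻¹ * ⟪B, Matrix.toEuclideanLin P (xt t)⟫) • k (x t)) t) :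
    (∀ T : ℝ, 0 ≤ T →
      ∫ τ in (0 : ℝ)..T, ⟪xt τ, Matrix.toEuclideanLin Q (xt τ)⟫ ≤
        ⟪xt 0, Matrix.toEuclideanLin P (xt 0)⟫ + Γ * ‖ft 0‖ ^ 2) ∧
    IntegrableOn (fun τ => ⟪xt τ, Matrix.toEuclideanLin Q (xt τ)⟫)
      (Set.Ici (0 : ℝ)) := by
  set g : ℝ → ℝ := fun τ => ⟪xt τ, Matrix.toEuclideanLin Q (xt τ)⟫ with hgdef
  set V : ℝ → ℝ := fun τ => ⟪xt τ, Matrix.toEuclideanLin P (xt τ)⟫ + Γ * ⟪ft τ, ft τ⟫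
    with hVdef
  have hPt : Pᵀ = P := by
    rw [← Matrix.conjTranspose_eq_transpose_of_trivial]; exact hP.1
  have hgnonneg : ∀ τ, 0 ≤ g τ := fun τ => aux_nonneg hQ.posSemidef _
  have hVnonneg : ∀ τ, 0 ≤ V τ := fun τ =>
    add_nonneg (aux_nonneg hP.posSemidef _) (mul_nonneg hΓ.le real_inner_self_nonneg)
  have hTPc : Continuous (Matrix.toEuclideanLin Q) :=
    LinearMap.continuous_of_finiteDimensional _
  have hgcont : ContinuousOn g (Set.Ici (0 : ℝ)) := by
    intro t ht
    have hc : ContinuousAt xt t := (hxt t ht).continuousAt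
    exact (hc.inner (hTPc.continuousAt.comp hc)).continuousWithinAt
  -- the Lyapunov derivative identity
  have hV' : ∀ t, 0 ≤ t → HasDerivAt V (-(g t)) t := by
    intro t ht
    have hx' := hxt t ht
    have hf' := hft t ht
    set v := xt t with hv
    set w := ft t with hw
    set c : ℝ := ⟪k (x t), w⟫ with hc
    set cp : ℝ := ⟪B, Matrix.toEuclideanLin P v⟫ with hcp
    have hPx : HasDerivAt (fun τ => Matrix.toEuclideanLin P (xt τ))
        (Matrix.toEuclideanLin P (Matrix.toEuclideanLin A v + c • B)) t :=
      ((Matrix.toEuclideanLin P).toContinuousLinearMap.hasFDerivAt).comp_hasDerivAt t hx'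
    have h1 : HasDerivAt (fun τ => ⟪xt τ, Matrix.toEuclideanLin P (xt τ)⟫)
        (⟪v, Matrix.toEuclideanLin P (Matrix.toEuclideanLin A v + c • B)⟫ +
          ⟪Matrix.toEuclideanLin A v + c • B, Matrix.toEuclideanLin P v⟫) t :=
      hx'.inner ℝ hPx
    have h2 : HasDerivAt (fun τ => Γ * ⟪ft τ, ft τ⟫)
        (Γ * (⟪w, -(Γ⁻¹ * cp) • k (x t)⟫ + ⟪-(Γ⁻¹ * cp) • k (x t), w⟫)) t :=
      (hf'.inner ℝ hf').const_mul Γ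
    have hsum := h1.add h2
    have hvPB : ⟪v, Matrix.toEuclideanLin P B⟫ = cp := by
      rw [real_inner_comm, aux_adj, hPt]
    have e1 : ⟪v, Matrix.toEuclideanLin P (Matrix.toEuclideanLin A v + c • B)⟫
        = ⟪v, Matrix.toEuclideanLin (P * A) v⟫ + c * cp := by
      rw [map_add, _root_.map_smul, inner_add_right, real_inner_smul_right, aux_mul_apply, hvPB]
    have e2 : ⟪Matrix.toEuclideanLin A v + c • B, Matrix.toEuclideanLin P v⟫
        = ⟪v, Matrix.toEuclideanLin (Aᵀ * P) v⟫ + c * cp := by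
      rw [inner_add_left, real_inner_smul_left, aux_adj, aux_mul_apply, ← hcp]
    have e3 : ⟪w, -(Γ⁻¹ * cp) • k (x t)⟫ = -(Γ⁻¹ * cp) * c := by
      rw [real_inner_smul_right, real_inner_comm, ← hc]
    have e4 : ⟪-(Γ⁻¹ * cp) • k (x t), w⟫ = -(Γ⁻¹ * cp) * c := by
      rw [real_inner_smul_left, ← hc]
    have e5 : ⟪v, Matrix.toEuclideanLin (Aᵀ * P) v⟫ +
        ⟪v, Matrix.toEuclideanLin (P * A) v⟫ = -(g t) := by
      have h := congrArg (fun M => ⟪v, Matrix.toEuclideanLin M v⟫) hLyap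
      simpa [map_add, inner_add_right, hgdef] using h
    refine hsum.congr_deriv ?_
    rw [e1, e2, e3, e4]
    have hΓ' : Γ * (Γ⁻¹ * cp) = cp := by field_simp
    linear_combination e5 - 2 * c * hΓ'
  -- the integral identity
  have key : ∀ T : ℝ, 0 ≤ T → ∫ τ in (0 : ℝ)..T, g τ = V 0 - V T := by
    intro T hT
    have hsub : Set.uIcc (0 : ℝ) T ⊆ Set.Ici 0 := by
      rw [Set.uIcc_of_le hT]; exact fun τ hτ => hτ.1
    have hint : IntervalIntegrable (fun τ => -(g τ)) volume 0 T :=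
      ((hgcont.mono hsub).neg).intervalIntegrable
    have heq := intervalIntegral.integral_eq_sub_of_hasDerivAt
      (f := V) (f' := fun τ => -(g τ)) (fun τ hτ => hV' τ (hsub hτ).out) hint
    rw [intervalIntegral.integral_neg] at heq
    linarith
  have bound : ∀ T : ℝ, 0 ≤ T → ∫ τ in (0 : ℝ)..T, g τ ≤ V 0 := by
    intro T hT
    rw [key T hT]
    linarith [hVnonneg T]
  have hV0 : V 0 = ⟪xt 0, Matrix.toEuclideanLin P (xt 0)⟫ + Γ * ‖ft 0‖ ^ 2 := by
    rw [hVdef]; simp [real_inner_self_eq_norm_sq]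
  constructor
  · intro T hT
    have := bound T hT
    rw [hV0] at this
    exact this
  · rw [integrableOn_Ici_iff_integrableOn_Ioi]
    apply MeasureTheory.integrableOn_Ioi_of_intervalIntegral_norm_bounded (V 0) 0
      (b := fun n : ℕ => (n : ℝ)) (l := atTop)
      (fun n => ((hgcont.mono (Set.Icc_subset_Ici_self : Set.Icc (0:ℝ) n ⊆ Set.Ici 0)).integrableOn_Icc).mono_set
        Set.Ioc_subset_Icc_self)
      tendsto_natCast_atTop_atTop
    filter_upwards with n
    have hnn : (0 : ℝ) ≤ n := Nat.cast_nonneg n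
    have : ∫ τ in (0 : ℝ)..(n : ℝ), ‖g τ‖ = ∫ τ in (0 : ℝ)..(n : ℝ), g τ :=
      intervalIntegral.integral_congr fun τ _ => Real.norm_of_nonneg (hgnonneg τ)
    rw [this]
    exact bound n hnn
end
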